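/- arXiv:2311.15699 — 5 statements merged into one kernel-verified Lean document; each statement's English description precedes it below -/
import Mathlib

section
/- Let y = (b, a, a, ..., a) ∈ ℕ^n with n ≥ 2. If a divides b or b > (n−1)a, then the number of invariant parking assortments for y is |PAinv_n(y)| = (n+1)^{n−1}, and the number of nondecreasing invariant parking assortments for y is |PAinv↑_n(y)| = C_n = (1/(n+1))·binom(2n, n), the n-th Catalan number. -/
/-- Car with preference `pref` and length `len` fits at spot `s`:
`pref ≤ s`, the spots `s, s+1, ..., s+len-1` all lie in the lot `[1, m]`,
and none of them is occupied. -/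
def FitsAt (occ : Finset ℕ) (m pref len s : ℕ) : Prop :=
  pref ≤ s ∧ s + len ≤ m + 1 ∧ ∀ t ∈ Finset.Ico s (s + len), t ∉ occ

/-- The car parks at `s`: `s` is the least spot (≥ its preference) where it fits. -/
def ParksAt (occ : Finset ℕ) (m pref len s : ℕ) : Prop :=
  FitsAt occ m pref len s ∧ ∀ s' < s, ¬ FitsAt occ m pref len s'

/-- Every car in the list of (preference, length) pairs can park, with
cars entering in order, starting from the set `occ` of occupied spots. -/
inductive Park (m : ℕ) : Finset ℕ → List (ℕ × ℕ) → Prop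
  | nil (occ : Finset ℕ) : Park m occ []
  | cons (occ : Finset ℕ) (pref len : ℕ) (rest : List (ℕ × ℕ)) (s : ℕ) :
      ParksAt occ m pref len s →
      Park m (occ ∪ Finset.Ico s (s + len)) rest →
      Park m occ ((pref, len) :: rest)

/-- `x` is a parking assortment for the length vector `y`. -/
def PA (y x : List ℕ) : Prop :=
  x.length = y.length ∧ (∀ v ∈ x, 1 ≤ v ∧ v ≤ y.sum) ∧ Park y.sum ∅ (x.zip y)

/-- `x` is a (permutation) invariant parking assortment for `y`. -/
def PAinv (y x : List ℕ) : Prop :=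
  ∀ x' : List ℕ, x.Perm x' → PA y x'

/-- The degree of `x`: the number of entries of `x` different from 1. -/
def deg (x : List ℕ) : ℕ := (x.filter (fun v => v ≠ 1)).length

/-- The characteristic of `y`: the greatest degree over all invariant
parking assortments for `y`. -/
noncomputable def chi (y : List ℕ) : ℕ := sSup {d | ∃ x, PAinv y x ∧ deg x = d}

/-- The invariant solution set of `y`. -/
def Wset (y : List ℕ) : Set ℕ :=
  {w | PAinv y (List.replicate (y.length - 1) 1 ++ [w])}
namespace Stmt5

/-! ### Generic Park lemmas -/

lemma park_append_left {m : ℕ} : ∀ (l₁ : List (ℕ × ℕ)) (occ : Finset ℕ) (l₂ : List (ℕ × ℕ)),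
    Park m occ (l₁ ++ l₂) → Park m occ l₁ := by
  intro l₁
  induction l₁ with
  | nil => intro occ l₂ _; exact Park.nil occ
  | cons c l ih =>
    rintro occ l₂ hp
    obtain ⟨pref, len⟩ := c
    cases hp with
    | cons _ _ _ _ s hps hrest => exact Park.cons _ _ _ _ s hps (ih _ _ hrest)

lemma park_sum_le {m P : ℕ} : ∀ (l : List (ℕ × ℕ)) (occ : Finset ℕ), Park m occ l →
    (∀ c ∈ l, P ≤ c.1) → (l.map Prod.snd).sum ≤ ((Finset.Ico P (m+1)) \ occ).card := by
  intro l
  induction l with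
  | nil => intro occ _ _; simp
  | cons c l ih =>
    rintro occ hp hpref
    obtain ⟨pref, len⟩ := c
    cases hp with
    | cons _ _ _ _ s hps hrest =>
      obtain ⟨⟨hs1, hs2, hs3⟩, -⟩ := hps
      have hP : P ≤ pref := hpref (pref, len) List.mem_cons_self
      have hIsub : Finset.Ico s (s+len) ⊆ (Finset.Ico P (m+1)) \ occ := by
        intro t ht
        rw [Finset.mem_Ico] at ht
        rw [Finset.mem_sdiff, Finset.mem_Ico]
        exact ⟨⟨le_trans (le_trans hP hs1) ht.1, lt_of_lt_of_le ht.2 hs2⟩,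
          hs3 t (Finset.mem_Ico.2 ht)⟩
      have h2 := ih (occ ∪ Finset.Ico s (s+len)) hrest (fun c hc => hpref c (by simp [hc]))
      have heq : (Finset.Ico P (m+1)) \ (occ ∪ Finset.Ico s (s+len))
          = ((Finset.Ico P (m+1)) \ occ) \ Finset.Ico s (s+len) := by
        ext t; simp [Finset.mem_sdiff]; tauto
      rw [heq, Finset.card_sdiff_of_subset hIsub, Nat.card_Ico] at h2
      have hcardI : s + len - s = len := by omega
      rw [hcardI] at h2
      have hle : len ≤ ((Finset.Ico P (m+1)) \ occ).card := by
        calc len = (Finset.Ico s (s+len)).card := by rw [Nat.card_Ico]; omega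
        _ ≤ _ := Finset.card_le_card hIsub
      simp only [List.map_cons, List.sum_cons]
      omega

lemma park_final {m a : ℕ} : ∀ (l : List (ℕ × ℕ)) (occ : Finset ℕ), Park m occ l →
    (∀ c ∈ l, 1 ≤ c.1 ∧ c.2 = a) →
    ∃ occ' : Finset ℕ, occ ⊆ occ' ∧ occ' ⊆ occ ∪ Finset.Ico 1 (m+1) ∧
      occ'.card = occ.card + (l.map Prod.snd).sum ∧
      ∀ v ∈ occ, (occ' ∩ Finset.Ico 1 v).card % a = (occ ∩ Finset.Ico 1 v).card % a := by
  intro l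
  induction l with
  | nil => intro occ _ _; exact ⟨occ, le_refl _, by simp, by simp, fun v _ => rfl⟩
  | cons c l ih =>
    rintro occ hp hc
    obtain ⟨pref, len⟩ := c
    obtain ⟨hpref1, hlen⟩ := hc (pref, len) (by simp)
    simp only at hpref1 hlen
    cases hp with
    | cons _ _ _ _ s hps hrest =>
      obtain ⟨⟨hs1, hs2, hs3⟩, -⟩ := hps
      set I := Finset.Ico s (s+len) with hI
      have hdisj : Disjoint occ I := by
        rw [Finset.disjoint_right]; intro t ht; exact hs3 t ht
      obtain ⟨occ', h1, h2, h3, h4⟩ := ih (occ ∪ I) hrest (fun c hc' => hc c (by simp [hc']))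
      refine ⟨occ', le_trans Finset.subset_union_left h1, ?_, ?_, ?_⟩
      · intro t ht
        have := h2 ht
        rw [Finset.mem_union] at this ⊢
        rcases this with h | h
        · rw [Finset.mem_union] at h
          rcases h with h | h
          · exact Or.inl h
          · right; rw [Finset.mem_Ico] at h ⊢; omega
        · exact Or.inr h
      · rw [h3, Finset.card_union_of_disjoint hdisj, Nat.card_Ico]
        simp only [List.map_cons, List.sum_cons]
        omega
      · intro v hv
        have hv2 : v ∈ occ ∪ I := Finset.mem_union_left _ hv
        rw [h4 v hv2]
        have hint : (occ ∪ I) ∩ Finset.Ico 1 v = (occ ∩ Finset.Ico 1 v) ∪ (I ∩ Finset.Ico 1 v) := by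
          ext t; simp [Finset.mem_union, Finset.mem_inter]; tauto
        have hdisj2 : Disjoint (occ ∩ Finset.Ico 1 v) (I ∩ Finset.Ico 1 v) :=
          Finset.disjoint_of_subset_left Finset.inter_subset_left
            (Finset.disjoint_of_subset_right Finset.inter_subset_left hdisj)
        rw [hint, Finset.card_union_of_disjoint hdisj2]
        have hIv : (I ∩ Finset.Ico 1 v).card % a = 0 := by
          rcases le_or_gt (s + len) v with h | h
          · have : I ∩ Finset.Ico 1 v = I := by
              apply Finset.inter_eq_left.2
              intro t ht; rw [Finset.mem_Ico] at ht ⊢; omega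
            rw [this, Nat.card_Ico, show s + len - s = a by omega, Nat.mod_self]
          · rcases le_or_gt v s with h' | h'
            · have : I ∩ Finset.Ico 1 v = ∅ := by
                ext t; simp [hI, Finset.mem_Ico]; omega
              simp [this]
            · exfalso
              exact hs3 v (Finset.mem_Ico.2 ⟨by omega, by omega⟩) hv
        rw [Nat.add_mod, hIv, add_zero, Nat.mod_mod_of_dvd _ dvd_rfl]

end Stmt5
namespace Stmt5

section Geom

variable (n a b u : ℕ)

/-- Start of cell `j` when the big car sits in cell `u`. -/
def cpos (j : ℕ) : ℕ := if j ≤ u then j*a+1 else (j-1)*a + b + 1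

/-- Size of cell `j`. -/
def csize (j : ℕ) : ℕ := if j = u then b else a

def occSet (T : Finset ℕ) : Finset ℕ :=
  T.biUnion (fun c => Finset.Ico (cpos a b u c) (cpos a b u c + csize a b u c))

variable {n a b u}
variable (ha : 0 < a) (hb : 0 < b) (hu : u < n)

lemma cpos_succ (j : ℕ) : cpos a b u (j+1) = cpos a b u j + csize a b u j := by
  unfold cpos csize
  rcases lt_trichotomy j u with h | h | h
  · rw [if_pos (by omega), if_pos (by omega), if_neg (by omega)]; ring
  · subst h; rw [if_neg (by omega), if_pos (le_refl _), if_pos rfl]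
    simp; ring
  · rw [if_neg (by omega), if_neg (by omega), if_neg (by omega)]
    obtain ⟨i, rfl⟩ : ∃ i, j = i + 1 := ⟨j-1, by omega⟩
    simp only [Nat.add_sub_cancel]
    ring

include ha hb in
lemma csize_pos (j : ℕ) : 0 < csize a b u j := by unfold csize; split <;> omega

include ha hb in
lemma cpos_strictMono : StrictMono (cpos a b u) := by
  apply strictMono_nat_of_lt_succ
  intro j; rw [cpos_succ]; have := csize_pos (a := a) (b := b) (u := u) ha hb j; omega

lemma cpos_zero : cpos a b u 0 = 1 := by unfold cpos; rw [if_pos (Nat.zero_le _)]; simp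

include hu in
lemma cpos_n : cpos a b u n = b + (n-1)*a + 1 := by
  unfold cpos; rw [if_neg (by omega)]; ring

include ha hb in
lemma cpos_add_le {j k : ℕ} (h : j < k) :
    cpos a b u j + csize a b u j ≤ cpos a b u k := by
  rw [← cpos_succ]
  exact (cpos_strictMono ha hb).monotone h

lemma cpos_cover : ∀ (J : ℕ) (t : ℕ), 1 ≤ t → t < cpos a b u J →
    ∃ j < J, cpos a b u j ≤ t ∧ t < cpos a b u j + csize a b u j := by
  intro J
  induction J with
  | zero => intro t ht h; rw [cpos_zero] at h; omega
  | succ J ih =>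
    intro t ht h
    rcases lt_or_ge t (cpos a b u J) with h' | h'
    · obtain ⟨j, hj, hj2⟩ := ih t ht h'
      exact ⟨j, by omega, hj2⟩
    · exact ⟨J, by omega, h', by rw [← cpos_succ]; exact h⟩

include ha hu in
lemma cpos_no_inside (hdiv : a ∣ b ∨ (n-1)*a < b) {k j : ℕ} (hk : k < n) (hj : j ≠ u)
    (h : cpos a b u j < k*a+1) : cpos a b u j + a ≤ k*a+1 := by
  unfold cpos at h ⊢
  rcases le_or_gt j u with hju | hju
  · rw [if_pos hju] at h ⊢
    have hjk : j < k := by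
      by_contra hc
      have := Nat.mul_le_mul_right a (not_lt.1 hc)
      linarith
    have h2 := Nat.mul_le_mul_right a (show j+1 ≤ k from hjk)
    rw [add_one_mul] at h2
    linarith
  · rw [if_neg (by omega)] at h ⊢
    rcases hdiv with ⟨q, hq⟩ | hbig
    · have h1 : (j - 1 + q) * a < k * a := by
        rw [add_mul, mul_comm q a, ← hq]; linarith
      have h2 : j - 1 + q < k := by
        by_contra hc
        have := Nat.mul_le_mul_right a (not_lt.1 hc)
        linarith
      have h3 : (j - 1 + q + 1) * a ≤ k * a := Nat.mul_le_mul_right a h2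
      rw [add_mul, add_mul, one_mul, mul_comm q a, ← hq] at h3
      linarith
    · exfalso
      have : k * a ≤ (n-1) * a := Nat.mul_le_mul_right a (by omega)
      have h0 : 0 ≤ (j-1) * a := Nat.zero_le _
      linarith

lemma cpos_ge (hba : a ≤ b) (j : ℕ) : j*a + 1 ≤ cpos a b u j := by
  unfold cpos
  rcases le_or_gt j u with h | h
  · rw [if_pos h]
  · rw [if_neg (by omega)]
    obtain ⟨i, rfl⟩ : ∃ i, j = i + 1 := ⟨j-1, by omega⟩
    simp only [Nat.add_sub_cancel, add_one_mul]
    linarith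

lemma mem_occSet {T : Finset ℕ} {t : ℕ} :
    t ∈ occSet a b u T ↔ ∃ c ∈ T, cpos a b u c ≤ t ∧ t < cpos a b u c + csize a b u c := by
  unfold occSet; simp [Finset.mem_Ico]

end Geom

end Stmt5
namespace Stmt5

section Sim

variable {n a b u : ℕ}


lemma sim (ha : 0 < a) (hb : 0 < b) (hu : u < n) (hdiv : a ∣ b ∨ (n-1)*a < b) :
    ∀ (L : List ℕ) (T : Finset ℕ), T ⊆ Finset.range n → u ∈ T →
      (∀ k ∈ L, k < n) →
      (∀ p : ℕ, L.countP (fun k => decide (p ≤ k)) ≤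
        ((Finset.range n).filter (fun j => j ∉ T ∧ p*a+1 ≤ cpos a b u j)).card) →
      Park (b + (n-1)*a) (occSet a b u T) (L.map (fun k => (k*a+1, a))) := by
  intro L
  induction L with
  | nil => intro T _ _ _ _; exact Park.nil _
  | cons k L' ih =>
    intro T hTsub hTu hmem hall
    have hk : k < n := hmem k (by simp)
    set F := (Finset.range n).filter (fun j => j ∉ T ∧ k*a+1 ≤ cpos a b u j) with hF
    have hFne : F.Nonempty := by
      rw [← Finset.card_pos]
      have h1 := hall k
      rw [← hF] at h1
      have h2 : 1 ≤ (k :: L').countP (fun k' => decide (k ≤ k')) := by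
        simp [List.countP_cons]
      omega
    set j₀ := F.min' hFne with hj₀
    have hj₀F : j₀ ∈ F := F.min'_mem hFne
    have hj₀min : ∀ j ∈ F, j₀ ≤ j := fun j hj => F.min'_le j hj
    rw [hF] at hj₀F
    simp only [Finset.mem_filter, Finset.mem_range] at hj₀F
    have hj₀n : j₀ < n := hj₀F.1
    have hj₀T : j₀ ∉ T := hj₀F.2.1
    have hj₀p : k*a+1 ≤ cpos a b u j₀ := hj₀F.2.2
    have hj₀u : j₀ ≠ u := fun h => hj₀T (h ▸ hTu)
    have hsize : csize a b u j₀ = a := if_neg hj₀u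
    set s := cpos a b u j₀ with hs
    have hfits : FitsAt (occSet a b u T) (b + (n-1)*a) (k*a+1) a s := by
      refine ⟨hj₀p, ?_, ?_⟩
      · have h1 : s + a = cpos a b u (j₀ + 1) := by rw [cpos_succ, hsize]
        have h2 : cpos a b u (j₀+1) ≤ cpos a b u n :=
          (cpos_strictMono (u := u) ha hb).monotone (by omega)
        rw [cpos_n hu] at h2
        omega
      · intro t ht hmem'
        rw [Finset.mem_Ico] at ht
        rw [mem_occSet] at hmem'
        obtain ⟨c, hcT, hc1, hc2⟩ := hmem'
        have hcj : c ≠ j₀ := fun h => hj₀T (h ▸ hcT)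
        rcases lt_or_gt_of_ne hcj with h | h
        · have := cpos_add_le ha hb (u := u) (b := b) h
          omega
        · have h2 := cpos_add_le ha hb (u := u) (b := b) h
          rw [hsize] at h2
          omega
    refine Park.cons _ _ _ _ s ⟨hfits, ?_⟩ ?_
    · -- minimality
      intro s' hs' hfit'
      obtain ⟨hf1, hf2, hf3⟩ := hfit'
      have ht1 : 1 ≤ s' := le_trans (Nat.succ_le_succ (Nat.zero_le _)) hf1
      have ht2 : s' < cpos a b u n :=
        lt_of_lt_of_le hs' ((cpos_strictMono (u := u) ha hb).monotone (by omega))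
      obtain ⟨c, hcn, hcc1, hcc2⟩ := cpos_cover n s' ht1 ht2
      by_cases hcT : c ∈ T
      · exact hf3 s' (Finset.mem_Ico.2 ⟨le_refl _, by omega⟩)
          (mem_occSet.2 ⟨c, hcT, hcc1, hcc2⟩)
      · have hcu : c ≠ u := fun h => hcT (h ▸ hTu)
        have hcsize : csize a b u c = a := if_neg hcu
        rw [hcsize] at hcc2
        rcases lt_or_ge (cpos a b u c) (k*a+1) with h | h
        · have h2 := cpos_no_inside ha hu hdiv hk hcu h
          linarith
        · have hcF : c ∈ F := by
            rw [hF]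
            simp only [Finset.mem_filter, Finset.mem_range]
            exact ⟨hcn, hcT, h⟩
          have h3 := hj₀min c hcF
          have h4 := (cpos_strictMono (u := u) ha hb).monotone h3
          omega
    · -- recursion
      have hocc : occSet a b u T ∪ Finset.Ico s (s+a) = occSet a b u (insert j₀ T) := by
        unfold occSet
        rw [Finset.biUnion_insert, hsize, ← hs, Finset.union_comm]
      rw [hocc]
      apply ih
      · intro j hj
        rw [Finset.mem_insert] at hj
        rcases hj with rfl | hj
        · exact Finset.mem_range.2 hj₀n
        · exact hTsub hj
      · exact Finset.mem_insert_of_mem hTu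
      · intro k' hk'; exact hmem k' (by simp [hk'])
      · intro p
        by_cases hp1 : p*a+1 ≤ cpos a b u j₀
        · have hnew : (Finset.range n).filter (fun j => j ∉ insert j₀ T ∧ p*a+1 ≤ cpos a b u j)
              = ((Finset.range n).filter (fun j => j ∉ T ∧ p*a+1 ≤ cpos a b u j)).erase j₀ := by
            ext j
            simp only [Finset.mem_filter, Finset.mem_erase, Finset.mem_insert, Finset.mem_range]
            constructor
            · rintro ⟨h1, h2, h3⟩
              push_neg at h2
              exact ⟨h2.1, h1, h2.2, h3⟩
            · rintro ⟨h1, h2, h3, h4⟩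
              exact ⟨h2, by push_neg; exact ⟨h1, h3⟩, h4⟩
          have hj₀old : j₀ ∈ (Finset.range n).filter (fun j => j ∉ T ∧ p*a+1 ≤ cpos a b u j) := by
            simp only [Finset.mem_filter, Finset.mem_range]
            exact ⟨hj₀n, hj₀T, hp1⟩
          rw [hnew, Finset.card_erase_of_mem hj₀old]
          by_cases hpk : p ≤ k
          · have h1 := hall p
            have h2 : (k :: L').countP (fun k' => decide (p ≤ k')) =
                L'.countP (fun k' => decide (p ≤ k')) + 1 := by
              simp [List.countP_cons, hpk]
            omega
          · push_neg at hpk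
            have hsets : (Finset.range n).filter (fun j => j ∉ T ∧ p*a+1 ≤ cpos a b u j) = F := by
              rw [hF]
              ext j
              simp only [Finset.mem_filter, Finset.mem_range]
              constructor
              · rintro ⟨h1, h2, h3⟩
                refine ⟨h1, h2, le_trans ?_ h3⟩
                have hmul : k * a ≤ p * a := Nat.mul_le_mul_right a (le_of_lt hpk)
                omega
              · rintro ⟨h1, h2, h3⟩
                refine ⟨h1, h2, ?_⟩
                have hj : j₀ ≤ j := hj₀min j (by
                  rw [hF]
                  simp only [Finset.mem_filter, Finset.mem_range]
                  exact ⟨h1, h2, h3⟩)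
                exact le_trans hp1 ((cpos_strictMono (u := u) ha hb).monotone hj)
            rw [hsets]
            have h1 := hall k
            rw [← hF] at h1
            have h2 : (k :: L').countP (fun k' => decide (k ≤ k')) =
                L'.countP (fun k' => decide (k ≤ k')) + 1 := by
              simp [List.countP_cons]
            have h3 : L'.countP (fun k' => decide (p ≤ k')) ≤ L'.countP (fun k' => decide (k ≤ k')) := by
              apply List.countP_mono_left
              intro x _ hx
              simp only [decide_eq_true_eq] at hx ⊢
              omega
            omega
        · push_neg at hp1
          have hnew : (Finset.range n).filter (fun j => j ∉ insert j₀ T ∧ p*a+1 ≤ cpos a b u j)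
              = (Finset.range n).filter (fun j => j ∉ T ∧ p*a+1 ≤ cpos a b u j) := by
            ext j
            simp only [Finset.mem_filter, Finset.mem_insert, Finset.mem_range]
            constructor
            · rintro ⟨h1, h2, h3⟩
              push_neg at h2
              exact ⟨h1, h2.2, h3⟩
            · rintro ⟨h1, h2, h3⟩
              refine ⟨h1, ?_, h3⟩
              push_neg
              refine ⟨?_, h2⟩
              rintro rfl
              exact absurd h3 (not_le.2 hp1)
          rw [hnew]
          have h1 := hall p
          have h2 : L'.countP (fun k' => decide (p ≤ k')) ≤ (k :: L').countP (fun k' => decide (p ≤ k')) := by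
            rw [List.countP_cons]
            exact Nat.le_add_right _ _
          omega

end Sim

end Stmt5
namespace Stmt5

/-- `w` encodes a classical (0-indexed) parking function of length `n`. -/
def GoodU (n : ℕ) (w : List ℕ) : Prop :=
  w.length = n ∧ (∀ k ∈ w, k < n) ∧ ∀ p : ℕ, w.countP (fun k => decide (p ≤ k)) ≤ n - p

lemma zip_replicate' {l : List ℕ} {n c : ℕ} (h : l.length = n) :
    l.zip (List.replicate n c) = l.map (fun v => (v, c)) := by
  subst h
  induction l with
  | nil => rfl
  | cons a l ih => simp [List.replicate_succ, ih]

section Char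

variable {n a b : ℕ}

lemma sum_y (hn : 1 ≤ n) : (b :: List.replicate (n-1) a).sum = b + (n-1)*a := by
  simp [List.sum_replicate, smul_eq_mul]

lemma len_y (hn : 1 ≤ n) : (b :: List.replicate (n-1) a).length = n := by
  simp; omega

lemma a_le_b (ha : 0 < a) (hb : 0 < b) (hn : 2 ≤ n) (hdiv : a ∣ b ∨ (n-1)*a < b) : a ≤ b := by
  rcases hdiv with ⟨q, hq⟩ | h
  · have hq1 : 1 ≤ q := by
      rcases Nat.eq_zero_or_pos q with rfl | h0
      · rw [mul_zero] at hq; omega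
      · exact h0
    calc a = a * 1 := (mul_one a).symm
    _ ≤ a * q := Nat.mul_le_mul_left a hq1
    _ = b := hq.symm
  · have : 1 * a ≤ (n-1) * a := Nat.mul_le_mul_right a (by omega)
    rw [one_mul] at this
    omega

lemma cnt_map_div (p : ℕ) (ha : 0 < a) (r : List ℕ) (hr : ∀ v ∈ r, ∃ k, v = k*a+1) :
    (r.map (fun v => (v-1)/a)).countP (fun k => decide (p ≤ k)) =
      r.countP (fun v => decide (p*a+1 ≤ v)) := by
  rw [List.countP_map]
  apply List.countP_congr
  intro v hv
  obtain ⟨k, rfl⟩ := hr v hv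
  have hdiv : (k*a+1-1)/a = k := by
    rw [Nat.add_sub_cancel, Nat.mul_div_cancel k ha]
  simp only [Function.comp, hdiv, decide_eq_true_eq]
  constructor
  · intro h
    exact Nat.add_le_add_right (Nat.mul_le_mul_right a h) 1
  · intro h
    have : p * a ≤ k * a := by omega
    exact Nat.le_of_mul_le_mul_right this ha

lemma good_PA (hn : 2 ≤ n) (ha : 0 < a) (hb : 0 < b) (hdiv : a ∣ b ∨ (n-1)*a < b)
    (w : List ℕ) (hw : GoodU n w) :
    PA (b :: List.replicate (n-1) a) (w.map (fun k => k*a+1)) := by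
  obtain ⟨hwlen, hwmem, hwcnt⟩ := hw
  have hba := a_le_b ha hb hn hdiv
  refine ⟨by rw [List.length_map, hwlen, len_y (by omega)], ?_, ?_⟩
  · intro v hv
    rw [List.mem_map] at hv
    obtain ⟨k, hk, rfl⟩ := hv
    have hkn : k < n := hwmem k hk
    have h1 : k * a ≤ (n-1) * a := Nat.mul_le_mul_right a (by omega)
    rw [sum_y (by omega)]
    constructor
    · omega
    · have : 1 ≤ b := hb
      linarith
  · rw [sum_y (by omega)]
    cases w with
    | nil => simp at hwlen; omega
    | cons u w' =>
      have hu : u < n := hwmem u (by simp)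
      have hw'len : (w'.map (fun k => k*a+1)).length = n - 1 := by
        simp only [List.length_map]
        simp at hwlen
        omega
      simp only [List.map_cons, List.zip_cons_cons]
      rw [zip_replicate' hw'len, List.map_map]
      have hzip : (fun v => (v, a)) ∘ (fun k => k*a+1) = fun k => (k*a+1, a) := rfl
      rw [hzip]
      apply Park.cons _ _ _ _ (u*a+1)
      · refine ⟨⟨le_refl _, ?_, fun t _ h => absurd h (Finset.notMem_empty t)⟩,
          fun s' hlt hf => absurd hf.1 (not_le.2 hlt)⟩
        have h1 : u * a ≤ (n-1) * a := Nat.mul_le_mul_right a (by omega)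
        linarith
      · have hocc : (∅ ∪ Finset.Ico (u*a+1) (u*a+1+b)) = occSet a b u {u} := by
          unfold occSet
          rw [Finset.singleton_biUnion, Finset.empty_union]
          unfold cpos csize
          rw [if_pos (le_refl u), if_pos rfl]
        rw [hocc]
        apply sim ha hb hu hdiv
        · intro j hj
          rw [Finset.mem_singleton] at hj
          subst hj
          exact Finset.mem_range.2 hu
        · exact Finset.mem_singleton_self u
        · intro k hk; exact hwmem k (by simp [hk])
        · intro p
          have hcnt := hwcnt p
          have hsub : (Finset.range n).filter (fun j => ¬j = u ∧ p ≤ j) ⊆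
              (Finset.range n).filter (fun j => j ∉ ({u} : Finset ℕ) ∧ p*a+1 ≤ cpos a b u j) := by
            intro j hj
            simp only [Finset.mem_filter, Finset.mem_range, Finset.mem_singleton] at hj ⊢
            refine ⟨hj.1, hj.2.1, ?_⟩
            have h1 : p * a ≤ j * a := Nat.mul_le_mul_right a hj.2.2
            have h2 := cpos_ge (a := a) (b := b) (u := u) hba j
            omega
          have hcard : ((Finset.range n).filter (fun j => ¬j = u ∧ p ≤ j)).card =
              if p ≤ u then n - p - 1 else n - p := by
            have he : (Finset.range n).filter (fun j => ¬j = u ∧ p ≤ j) =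
                (Finset.Ico p n).erase u := by
              ext j
              simp only [Finset.mem_filter, Finset.mem_range, Finset.mem_erase, Finset.mem_Ico]
              tauto
            by_cases hpu : p ≤ u
            · rw [if_pos hpu, he, Finset.card_erase_of_mem (Finset.mem_Ico.2 ⟨hpu, hu⟩), Nat.card_Ico]
            · rw [if_neg hpu, he, Finset.erase_eq_of_notMem (fun h => hpu (Finset.mem_Ico.1 h).1), Nat.card_Ico]
          have hmono := Finset.card_le_card hsub
          rw [hcard] at hmono
          rw [List.countP_cons] at hcnt
          by_cases hpu : p ≤ u
          · rw [if_pos hpu] at hmono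
            have : decide (p ≤ u) = true := decide_eq_true hpu
            rw [this] at hcnt
            simp at hcnt
            have hun : u < n := hu
            omega
          · rw [if_neg hpu] at hmono
            have hle : w'.countP (fun k => decide (p ≤ k)) ≤
                (u :: w').countP (fun k => decide (p ≤ k)) := by
              rw [List.countP_cons]; exact Nat.le_add_right _ _
            rw [List.countP_cons] at hle
            omega

theorem painv_iff (hn : 2 ≤ n) (ha : 0 < a) (hb : 0 < b)
    (hdiv : a ∣ b ∨ (n-1)*a < b) (x : List ℕ) :
    PAinv (b :: List.replicate (n-1) a) x ↔
      ∃ w : List ℕ, GoodU n w ∧ x = w.map (fun k => k*a+1) := by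
  have hn1 : 1 ≤ n := by omega
  constructor
  · -- forward direction
    intro hinv
    have hPA := hinv x (List.Perm.refl x)
    have hxlen : x.length = n := by rw [hPA.1, len_y hn1]
    -- each entry has the right form
    have hentry : ∀ v ∈ x, ∃ k, k < n ∧ v = k*a+1 := by
      intro v hv
      have hperm := List.perm_cons_erase hv
      have hPA' := hinv _ hperm
      obtain ⟨hlen', hbd', hpark'⟩ := hPA'
      rw [sum_y hn1] at hpark' hbd'
      have herlen : (x.erase v).length = n - 1 := by
        rw [List.length_erase_of_mem hv, hxlen]
      simp only [List.zip_cons_cons] at hpark'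
      cases hpark' with
      | cons _ _ _ _ s hps hrest =>
        obtain ⟨⟨hs1, hs2, _⟩, hmin⟩ := hps
        have hv1 : 1 ≤ v := (hbd' v (by simp)).1
        have hsv : s = v := by
          by_contra hne
          have hlt : v < s := by omega
          exact hmin v hlt ⟨le_refl v, by omega, fun t _ h => absurd h (Finset.notMem_empty t)⟩
        rw [hsv] at hrest hs2
        rw [Finset.empty_union] at hrest
        have hforms : ∀ c ∈ (x.erase v).zip (List.replicate (n-1) a), 1 ≤ c.1 ∧ c.2 = a := by
          rintro ⟨c1, c2⟩ hc
          obtain ⟨hc1, hc2⟩ := List.of_mem_zip hc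
          exact ⟨(hbd' c1 (by simp [hc1])).1, List.eq_of_mem_replicate hc2⟩
        obtain ⟨hsub1, hsub2, hcard, hmod⟩ :=
          (park_final _ _ hrest hforms).choose_spec
        set occ' := (park_final _ _ hrest hforms).choose with hocc'
        have hsum : (((x.erase v).zip (List.replicate (n-1) a)).map Prod.snd).sum = (n-1)*a := by
          rw [zip_replicate' herlen, List.map_map]
          have h0 : (Prod.snd ∘ fun v : ℕ => (v, a)) = (fun _ : ℕ => a) := rfl
          rw [h0, List.map_const', herlen, List.sum_replicate, smul_eq_mul]
        rw [hsum] at hcard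
        have hIcard : (Finset.Ico v (v+b)).card = b := by rw [Nat.card_Ico]; omega
        rw [hIcard] at hcard
        have hIsub : Finset.Ico v (v+b) ⊆ Finset.Ico 1 (b + (n-1)*a + 1) := by
          intro t ht; rw [Finset.mem_Ico] at ht ⊢; omega
        have hocc'sub : occ' ⊆ Finset.Ico 1 (b + (n-1)*a + 1) := by
          intro t ht
          rcases Finset.mem_union.1 (hsub2 ht) with h | h
          · exact hIsub h
          · exact h
        have hocc'eq : occ' = Finset.Ico 1 (b + (n-1)*a + 1) := by
          apply Finset.eq_of_subset_of_card_le hocc'sub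
          rw [hcard, Nat.card_Ico]
          omega
        have hvm : v ≤ (n-1)*a + 1 := by linarith
        have hmod2 := hmod v (Finset.mem_Ico.2 ⟨le_refl v, by omega⟩)
        have h1 : occ' ∩ Finset.Ico 1 v = Finset.Ico 1 v := by
          rw [hocc'eq]
          apply Finset.inter_eq_right.2
          intro t ht; rw [Finset.mem_Ico] at ht ⊢
          constructor
          · exact ht.1
          · have : v ≤ b + (n-1)*a + 1 := by linarith
            omega
        have h2 : Finset.Ico v (v+b) ∩ Finset.Ico 1 v = ∅ := by
          ext t
          simp only [Finset.mem_inter, Finset.mem_Ico, Finset.notMem_empty, iff_false]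
          omega
        rw [h1, h2] at hmod2
        simp only [Finset.card_empty, Nat.zero_mod, Nat.card_Ico] at hmod2
        have hdvd : a ∣ v - 1 := Nat.dvd_of_mod_eq_zero hmod2
        obtain ⟨k, hk⟩ := hdvd
        have hva : v = a * k + 1 := by rw [← hk]; omega
        have hvsub : v - 1 ≤ (n-1) * a := Nat.sub_le_iff_le_add.2 (by linarith)
        have hkle : k ≤ n - 1 := by
          have h3 : a * k ≤ a * (n-1) := by rw [← hk, mul_comm a (n-1)]; exact hvsub
          exact Nat.le_of_mul_le_mul_left h3 ha
        exact ⟨k, by omega, by rw [hva, mul_comm]⟩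
    refine ⟨x.map (fun v => (v-1)/a), ⟨?_, ?_, ?_⟩, ?_⟩
    · rw [List.length_map, hxlen]
    · intro k hk
      rw [List.mem_map] at hk
      obtain ⟨v, hv, rfl⟩ := hk
      obtain ⟨k', hk', rfl⟩ := hentry v hv
      rwa [Nat.add_sub_cancel, Nat.mul_div_cancel k' ha]
    · intro p
      rw [cnt_map_div p ha x (fun v hv => ⟨(hentry v hv).choose, (hentry v hv).choose_spec.2⟩)]
      rcases le_or_gt n p with hnp | hnp
      · have hzero : x.countP (fun v => decide (p*a+1 ≤ v)) = 0 := by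
          rw [List.countP_eq_zero]
          intro v hv
          obtain ⟨k, hk, rfl⟩ := hentry v hv
          simp only [decide_eq_true_eq]
          intro hc
          have hpk : p ≤ k := Nat.le_of_mul_le_mul_right (Nat.le_of_succ_le_succ hc) ha
          omega
        omega
      · by_contra hcon
        push_neg at hcon
        set f := x.countP (fun v => decide (p*a+1 ≤ v)) with hf
        have hfle : f ≤ n := by
          rw [hf, ← hxlen]
          exact List.countP_le_length
        have hf1 : 1 ≤ f := by omega
        have hperm2 : x.Perm (x.filter (fun v => decide (p*a+1 ≤ v)) ++
            x.filter (fun v => !decide (p*a+1 ≤ v))) :=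
          (List.filter_append_perm _ x).symm
        obtain ⟨-, -, hpark2⟩ := hinv _ hperm2
        rw [sum_y hn1] at hpark2
        set xF := x.filter (fun v => decide (p*a+1 ≤ v)) with hxF
        have hxFlen : xF.length = f := by rw [hxF, hf, List.countP_eq_length_filter]
        have hysplit : (b :: List.replicate (n-1) a) =
            (b :: List.replicate (f-1) a) ++ List.replicate (n-f) a := by
          rw [List.cons_append, ← List.replicate_add]
          have : f - 1 + (n - f) = n - 1 := by omega
          rw [this]
        have hlen2 : xF.length = (b :: List.replicate (f-1) a).length := by
          simp [hxFlen]
          omega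
        rw [hysplit, List.zip_append hlen2] at hpark2
        have hpark3 := park_append_left _ _ _ hpark2
        have hprefs : ∀ c ∈ xF.zip (b :: List.replicate (f-1) a), p*a+1 ≤ c.1 := by
          rintro ⟨c1, c2⟩ hc
          obtain ⟨hc1, -⟩ := List.of_mem_zip hc
          rw [hxF, List.mem_filter] at hc1
          simpa using hc1.2
        have hsum0 := park_sum_le (P := p*a+1) _ _ hpark3 hprefs
        have hsumeq : ((xF.zip (b :: List.replicate (f-1) a)).map Prod.snd).sum = b + (f-1)*a := by
          rw [List.map_snd_zip (le_of_eq hlen2.symm)]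
          simp [List.sum_replicate, smul_eq_mul]
        have hcard2 : ((Finset.Ico (p*a+1) (b + (n-1)*a + 1)) \ (∅ : Finset ℕ)).card
            = b + (n-1)*a - p*a := by
          rw [Finset.sdiff_empty, Nat.card_Ico]
          have h0 : ∀ X Y bb : ℕ, (bb + X + 1) - (Y + 1) = bb + X - Y := fun _ _ _ => by omega
          exact h0 _ _ _
        rw [hsumeq, hcard2] at hsum0
        have hpa : p*a ≤ (n-1)*a := Nat.mul_le_mul_right a (by omega)
        have h3 : (f-1)*a + p*a ≤ (n-1)*a := by
          have h0 : ∀ B FA NA PP : ℕ, PP ≤ NA → B + FA ≤ B + NA - PP → FA + PP ≤ NA :=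
            fun _ _ _ _ hx hy => by omega
          exact h0 b _ _ _ hpa hsum0
        rw [← Nat.add_mul] at h3
        have h4 : f - 1 + p ≤ n - 1 := Nat.le_of_mul_le_mul_right h3 ha
        omega
    · have h0 : x.map ((fun k => k*a+1) ∘ fun v => (v-1)/a) = x.map id := by
        apply List.map_congr_left
        intro v hv
        obtain ⟨k, hk, rfl⟩ := hentry v hv
        simp only [Function.comp, Nat.add_sub_cancel, Nat.mul_div_cancel k ha, id]
      rw [List.map_map, h0, List.map_id]
  · rintro ⟨w, hw, rfl⟩
    intro x' hperm
    obtain ⟨hwlen, hwmem, hwcnt⟩ := hw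
    have hx'mem : ∀ v ∈ x', ∃ k, k < n ∧ v = k*a+1 := by
      intro v hv
      have := hperm.mem_iff.2 hv
      rw [List.mem_map] at this
      obtain ⟨k, hk, rfl⟩ := this
      exact ⟨k, hwmem k hk, rfl⟩
    have hx'eq : x' = (x'.map (fun v => (v-1)/a)).map (fun k => k*a+1) := by
      rw [List.map_map]
      have h0 : x'.map ((fun k => k*a+1) ∘ fun v => (v-1)/a) = x'.map id := by
        apply List.map_congr_left
        intro v hv
        obtain ⟨k, hk, rfl⟩ := hx'mem v hv
        simp only [Function.comp, Nat.add_sub_cancel, Nat.mul_div_cancel k ha, id]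
      rw [h0, List.map_id]
    have hgood' : GoodU n (x'.map (fun v => (v-1)/a)) := by
      refine ⟨?_, ?_, ?_⟩
      · rw [List.length_map, hperm.length_eq.symm, List.length_map, hwlen]
      · intro k hk
        rw [List.mem_map] at hk
        obtain ⟨v, hv, rfl⟩ := hk
        obtain ⟨k', hk', rfl⟩ := hx'mem v hv
        rwa [Nat.add_sub_cancel, Nat.mul_div_cancel k' ha]
      · intro p
        rw [cnt_map_div p ha x' (fun v hv => ⟨(hx'mem v hv).choose, (hx'mem v hv).choose_spec.2⟩)]
        have he1 : x'.countP (fun v => decide (p*a+1 ≤ v)) =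
            (w.map (fun k => k*a+1)).countP (fun v => decide (p*a+1 ≤ v)) :=
          (hperm.countP_eq _).symm
        rw [he1, List.countP_map]
        have he2 : w.countP ((fun v => decide (p*a+1 ≤ v)) ∘ (fun k => k*a+1)) =
            w.countP (fun k => decide (p ≤ k)) := by
          apply List.countP_congr
          intro k hk
          simp only [Function.comp, decide_eq_true_eq]
          constructor
          · intro h
            exact Nat.le_of_mul_le_mul_right (Nat.le_of_succ_le_succ h) ha
          · intro h
            exact Nat.add_le_add_right (Nat.mul_le_mul_right a h) 1
        rw [he2]
        exact hwcnt p
    rw [hx'eq]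
    exact good_PA hn ha hb hdiv _ hgood'

end Char

end Stmt5
namespace Stmt5

section Count

variable {n : ℕ}

/-- Prefix sums minus `k`. -/
def Tsum (n : ℕ) (cnt : ZMod (n+1) → ℕ) (k : ℕ) : ℤ :=
  (∑ j ∈ Finset.range k, (cnt ((j : ℕ) : ZMod (n+1)) : ℤ)) - k

lemma cast_bij : Function.Bijective (fun j : Fin (n+1) => ((j : ℕ) : ZMod (n+1))) := by
  rw [Fintype.bijective_iff_injective_and_card]
  constructor
  · intro i j hij
    simp only at hij
    apply Fin.ext
    rw [← ZMod.val_cast_of_lt i.isLt, hij, ZMod.val_cast_of_lt j.isLt]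
  · simp [ZMod.card]

lemma sum_range_card (cnt : ZMod (n+1) → ℕ) :
    ∑ j ∈ Finset.range (n+1), cnt ((j : ℕ) : ZMod (n+1)) = ∑ r : ZMod (n+1), cnt r := by
  rw [← Fin.sum_univ_eq_sum_range (fun j => cnt ((j : ℕ) : ZMod (n+1)))]
  exact Fintype.sum_bijective _ cast_bij _ _ (fun _ => rfl)

lemma Tsum_succ (cnt : ZMod (n+1) → ℕ) (k : ℕ) :
    Tsum n cnt (k+1) = Tsum n cnt k + cnt ((k : ℕ) : ZMod (n+1)) - 1 := by
  unfold Tsum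
  rw [Finset.sum_range_succ]
  push_cast
  ring

lemma Tsum_period (cnt : ZMod (n+1) → ℕ) (hsum : ∑ r : ZMod (n+1), cnt r = n) (k : ℕ) :
    Tsum n cnt (k + (n+1)) = Tsum n cnt k - 1 := by
  induction k with
  | zero =>
    have h0 : Tsum n cnt 0 = 0 := by unfold Tsum; simp
    have h1 : Tsum n cnt (0 + (n+1)) = Tsum n cnt (n+1) := by norm_num
    rw [h1, h0]
    unfold Tsum
    rw [← Nat.cast_sum, sum_range_card cnt, hsum]
    push_cast
    ring
  | succ k ih =>
    have h1 : k + 1 + (n+1) = (k + (n+1)) + 1 := by omega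
    rw [h1, Tsum_succ, ih, Tsum_succ]
    have h2 : ((k + (n+1) : ℕ) : ZMod (n+1)) = ((k : ℕ) : ZMod (n+1)) := by
      rw [Nat.cast_add, ZMod.natCast_self, add_zero]
    rw [h2]
    ring

/-- `e` is a good rotation start. -/
def GoodE (n : ℕ) (cnt : ZMod (n+1) → ℕ) (e : ℕ) : Prop :=
  ∀ k, 1 ≤ k → k ≤ n → Tsum n cnt e ≤ Tsum n cnt (e + k)

lemma goodE_exists_unique (hn : 1 ≤ n) (cnt : ZMod (n+1) → ℕ)
    (hsum : ∑ r : ZMod (n+1), cnt r = n) :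
    ∃! e, e ≤ n ∧ GoodE n cnt e := by
  have hex : ∃ e, e ≤ n ∧ ∀ e', e' ≤ n → Tsum n cnt e ≤ Tsum n cnt e' := by
    obtain ⟨e, he, hmin⟩ := (Finset.range (n+1)).exists_min_image (Tsum n cnt)
      ⟨0, Finset.mem_range.2 (by omega)⟩
    rw [Finset.mem_range] at he
    exact ⟨e, by omega, fun e' he' => hmin e' (Finset.mem_range.2 (by omega))⟩
  set e := Nat.find hex with hedef
  obtain ⟨hen, hemin⟩ := Nat.find_spec hex
  have hGood : GoodE n cnt e := by
    intro k hk1 hk2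
    rcases le_or_gt (e + k) n with h | h
    · exact hemin (e+k) h
    · have he2 : e + k = (e + k - (n+1)) + (n+1) := by omega
      rw [he2, Tsum_period cnt hsum]
      set e2 := e + k - (n+1) with he2d
      have he2lt : e2 < e := by omega
      have he2n : e2 ≤ n := by omega
      have hge : Tsum n cnt e ≤ Tsum n cnt e2 := hemin e2 he2n
      have hne : Tsum n cnt e2 ≠ Tsum n cnt e := by
        intro heq
        have : e2 < e ∧ ¬(e2 ≤ n ∧ ∀ e', e' ≤ n → Tsum n cnt e2 ≤ Tsum n cnt e') := by
          refine ⟨he2lt, Nat.find_min hex he2lt⟩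
        exact this.2 ⟨he2n, fun e' he' => heq ▸ hemin e' he'⟩
      omega
  refine ⟨e, ⟨hen, hGood⟩, ?_⟩
  rintro e' ⟨he'n, hGood'⟩
  by_contra hne
  -- wlog via trichotomy
  rcases lt_trichotomy e' e with hlt | heq | hgt
  · have h1 : Tsum n cnt e' ≤ Tsum n cnt e := by
      have := hGood' (e - e') (by omega) (by omega)
      rwa [show e' + (e - e') = e by omega] at this
    have h2 : Tsum n cnt e ≤ Tsum n cnt (e + (e' + n + 1 - e)) :=
      hGood (e' + n + 1 - e) (by omega) (by omega)
    rw [show e + (e' + n + 1 - e) = e' + (n+1) by omega, Tsum_period cnt hsum] at h2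
    omega
  · exact hne heq
  · have h1 : Tsum n cnt e ≤ Tsum n cnt e' := by
      have := hGood (e' - e) (by omega) (by omega)
      rwa [show e + (e' - e) = e' by omega] at this
    have h2 : Tsum n cnt e' ≤ Tsum n cnt (e' + (e + n + 1 - e')) :=
      hGood' (e + n + 1 - e') (by omega) (by omega)
    rw [show e' + (e + n + 1 - e') = e + (n+1) by omega, Tsum_period cnt hsum] at h2
    omega

lemma shift_sum (cnt : ZMod (n+1) → ℕ) (c : ZMod (n+1)) (k : ℕ) :
    ∑ j ∈ Finset.range k, (cnt ((j : ℕ) - c) : ℤ) =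
      Tsum n cnt ((-c).val + k) - Tsum n cnt ((-c).val) + k := by
  set e := (-c).val with he
  have hcast : ((e : ℕ) : ZMod (n+1)) = -c := ZMod.natCast_rightInverse (-c)
  have h1 : ∀ j : ℕ, ((j : ℕ) : ZMod (n+1)) - c = (((j + e : ℕ)) : ZMod (n+1)) := by
    intro j
    push_cast [hcast]
    ring
  calc ∑ j ∈ Finset.range k, (cnt ((j : ℕ) - c) : ℤ)
      = ∑ j ∈ Finset.range k, (cnt (((j + e : ℕ)) : ZMod (n+1)) : ℤ) := by
        apply Finset.sum_congr rfl
        intro j _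
        exact congrArg (fun r => ((cnt r : ℕ) : ℤ)) (h1 j)
    _ = ∑ j ∈ Finset.Ico e (e + k), (cnt ((j : ℕ) : ZMod (n+1)) : ℤ) := by
        rw [Finset.sum_Ico_eq_sum_range]
        simp only [Nat.add_sub_cancel_left]
        apply Finset.sum_congr rfl
        intro j _
        exact congrArg (fun t => ((cnt ((t : ℕ) : ZMod (n+1)) : ℕ) : ℤ)) (Nat.add_comm j e)
    _ = (∑ j ∈ Finset.range (e+k), (cnt ((j : ℕ) : ZMod (n+1)) : ℤ))
        - ∑ j ∈ Finset.range e, (cnt ((j : ℕ) : ZMod (n+1)) : ℤ) :=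
        (Finset.sum_Ico_eq_sub _ (Nat.le_add_right _ _))
    _ = _ := by unfold Tsum; push_cast; ring

lemma numkey (hn : 1 ≤ n) (cnt : ZMod (n+1) → ℕ) (hsum : ∑ r : ZMod (n+1), cnt r = n) :
    ∃! c : ZMod (n+1), ∀ k, 1 ≤ k → k ≤ n →
      (k : ℕ) ≤ ∑ j ∈ Finset.range k, cnt ((j : ℕ) - c) := by
  have hcond : ∀ c : ZMod (n+1),
      (∀ k, 1 ≤ k → k ≤ n → (k : ℕ) ≤ ∑ j ∈ Finset.range k, cnt ((j : ℕ) - c)) ↔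
        GoodE n cnt ((-c).val) := by
    intro c
    constructor
    · intro h k hk1 hk2
      have h2 := h k hk1 hk2
      have h3 : (k : ℤ) ≤ ∑ j ∈ Finset.range k, (cnt ((j : ℕ) - c) : ℤ) := by
        rw [← Nat.cast_sum]
        exact_mod_cast h2
      rw [shift_sum cnt c k] at h3
      omega
    · intro h k hk1 hk2
      have h3 := h k hk1 hk2
      have h4 : (k : ℤ) ≤ ∑ j ∈ Finset.range k, (cnt ((j : ℕ) - c) : ℤ) := by
        rw [shift_sum cnt c k]
        omega
      rw [← Nat.cast_sum] at h4
      exact_mod_cast h4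
  obtain ⟨e, ⟨hen, hGood⟩, hu⟩ := goodE_exists_unique hn cnt hsum
  refine ⟨-((e : ℕ) : ZMod (n+1)), ?_, ?_⟩
  · apply (hcond _).2
    have hval : (-(-((e : ℕ) : ZMod (n+1)))).val = e := by
      rw [neg_neg, ZMod.val_cast_of_lt (by omega)]
    rw [hval]
    exact hGood
  · intro c' hc'
    have hc'' := (hcond c').1 hc'
    have hval : (-c').val ≤ n := by
      have := ZMod.val_lt (-c')
      omega
    have := hu (-c').val ⟨hval, hc''⟩
    have h2 : -c' = ((e : ℕ) : ZMod (n+1)) := by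
      rw [← this, ZMod.natCast_rightInverse (-c')]
    rw [← h2, neg_neg]

end Count

end Stmt5
namespace Stmt5

section Count2

variable {n : ℕ}

/-- classical parking function, `ZMod`-valued. -/
def Pk (n : ℕ) (g : Fin n → ZMod (n+1)) : Prop :=
  ∀ k, 1 ≤ k → k ≤ n → k ≤ (Finset.univ.filter (fun i => (g i).val < k)).card

lemma count_filter_eq_sum (g : Fin n → ZMod (n+1)) (c : ZMod (n+1)) :
    ∀ k, k ≤ n+1 →
      (Finset.univ.filter (fun i => (g i + c).val < k)).card =
        ∑ j ∈ Finset.range k,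
          (Finset.univ.filter (fun i => g i = ((j:ℕ) : ZMod (n+1)) - c)).card := by
  intro k
  induction k with
  | zero => intro _; simp
  | succ k ih =>
    intro hk
    rw [Finset.sum_range_succ, ← ih (by omega)]
    have hval : ∀ i, g i = ((k:ℕ) : ZMod (n+1)) - c ↔ (g i + c).val = k := by
      intro i
      constructor
      · intro h; rw [h, sub_add_cancel, ZMod.val_cast_of_lt (by omega)]
      · intro h
        have h2 : g i + c = ((k:ℕ) : ZMod (n+1)) := by
          rw [← h]
          exact (ZMod.natCast_rightInverse (g i + c)).symm
        rw [← h2]; ring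
    have hsplit : (Finset.univ.filter (fun i => (g i + c).val < k+1)) =
        (Finset.univ.filter (fun i => (g i + c).val < k)) ∪
          (Finset.univ.filter (fun i => g i = ((k:ℕ) : ZMod (n+1)) - c)) := by
      ext i
      simp only [Finset.mem_filter, Finset.mem_union, Finset.mem_univ, true_and]
      rw [hval i]
      omega
    rw [hsplit, Finset.card_union_of_disjoint]
    rw [Finset.disjoint_left]
    intro i hi1 hi2
    rw [Finset.mem_filter] at hi1 hi2
    rw [hval i] at hi2
    omega

lemma fiber_sum (g : Fin n → ZMod (n+1)) :
    ∑ r : ZMod (n+1), (Finset.univ.filter (fun i => g i = r)).card = n := by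
  rw [← Finset.card_eq_sum_card_fiberwise (fun i (_ : i ∈ Finset.univ) => Finset.mem_univ (g i))]
  simp

lemma funkey (hn : 1 ≤ n) (h : Fin n → ZMod (n+1)) :
    ∃! c : ZMod (n+1), Pk n (fun i => h i + c) := by
  obtain ⟨c, hc, hu⟩ := numkey hn (fun r => (Finset.univ.filter (fun i => h i = r)).card)
    (fiber_sum h)
  have hiff : ∀ c' : ZMod (n+1), Pk n (fun i => h i + c') ↔
      (∀ k, 1 ≤ k → k ≤ n → k ≤ ∑ j ∈ Finset.range k,
        (Finset.univ.filter (fun i => h i = ((j:ℕ):ZMod (n+1)) - c')).card) := by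
    intro c'
    unfold Pk
    constructor
    · intro hp k h1 h2
      rw [← count_filter_eq_sum h c' k (by omega)]
      exact hp k h1 h2
    · intro hp k h1 h2
      rw [count_filter_eq_sum h c' k (by omega)]
      exact hp k h1 h2
  exact ⟨c, (hiff c).2 hc, fun c' h' => hu c' ((hiff c').1 h')⟩

lemma card_Pk (hn : 1 ≤ n) :
    Nat.card {g : Fin n → ZMod (n+1) // Pk n g} * (n+1) = (n+1)^n := by
  classical
  have E : {g : Fin n → ZMod (n+1) // Pk n g} × ZMod (n+1) ≃ (Fin n → ZMod (n+1)) := by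
    refine ⟨fun p => fun i => p.1.1 i + p.2,
      fun h => ⟨⟨fun i => h i + (funkey hn h).choose, (funkey hn h).choose_spec.1⟩,
        -(funkey hn h).choose⟩, ?_, ?_⟩
    · rintro ⟨⟨g, hg⟩, c⟩
      simp only
      have hch : (funkey hn (fun i => g i + c)).choose = -c := by
        refine ((funkey hn (fun i => g i + c)).choose_spec.2 (-c) ?_).symm
        show Pk n (fun i => g i + c + -c)
        have heq2 : (fun i : Fin n => g i + c + -c) = g := by funext i; ring
        rw [heq2]
        exact hg
      refine Prod.ext ?_ ?_
      · apply Subtype.ext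
        funext i
        simp only [hch]
        ring
      · simp [hch]
    · intro h
      funext i
      simp
  have h1 := Nat.card_congr E
  rw [Nat.card_prod] at h1
  have h2 : Nat.card (ZMod (n+1)) = n+1 := by
    rw [Nat.card_eq_fintype_card, ZMod.card]
  have h3 : Nat.card (Fin n → ZMod (n+1)) = (n+1)^n := by
    rw [Nat.card_eq_fintype_card, Fintype.card_fun, ZMod.card, Fintype.card_fin]
  rw [h2, h3] at h1
  exact h1

/-- parking multiset condition. -/
def PkM (n : ℕ) (q : Multiset (ZMod (n+1))) : Prop :=
  ∀ k, 1 ≤ k → k ≤ n → k ≤ ∑ j ∈ Finset.range k, q.count ((j:ℕ) : ZMod (n+1))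

lemma msum_count (q : Multiset (ZMod (n+1))) :
    ∑ r : ZMod (n+1), q.count r = Multiset.card q := by
  rw [← Multiset.toFinset_sum_count_eq]
  exact (Finset.sum_subset (Finset.subset_univ _) (fun x _ hx =>
    Multiset.count_eq_zero_of_notMem (by simpa using hx))).symm

lemma count_map_add (q : Multiset (ZMod (n+1))) (c r : ZMod (n+1)) :
    (q.map (· + c)).count r = q.count (r - c) := by
  conv_lhs => rw [show r = (r - c) + c by ring]
  exact Multiset.count_map_eq_count' _ q (add_left_injective c) _

lemma multkey (hn : 1 ≤ n) (q : Multiset (ZMod (n+1))) (hq : Multiset.card q = n) :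
    ∃! c : ZMod (n+1), PkM n (q.map (· + c)) := by
  obtain ⟨c, hc, hu⟩ := numkey hn q.count (by rw [msum_count, hq])
  have hiff : ∀ c' : ZMod (n+1), PkM n (q.map (· + c')) ↔
      (∀ k, 1 ≤ k → k ≤ n → (k:ℕ) ≤ ∑ j ∈ Finset.range k,
        q.count (((j:ℕ) : ZMod (n+1)) - c')) := by
    intro c'
    unfold PkM
    have he : ∀ k : ℕ, ∑ j ∈ Finset.range k, (q.map (· + c')).count ((j:ℕ) : ZMod (n+1)) =
        ∑ j ∈ Finset.range k, q.count (((j:ℕ):ZMod (n+1)) - c') :=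
      fun k => Finset.sum_congr rfl (fun j _ => count_map_add q c' _)
    constructor
    · intro hp k h1 h2; rw [← he k]; exact hp k h1 h2
    · intro hp k h1 h2; rw [he k]; exact hp k h1 h2
  exact ⟨c, (hiff c).2 hc, fun c' h' => hu c' ((hiff c').1 h')⟩

lemma map_add_neg (q : Multiset (ZMod (n+1))) (c : ZMod (n+1)) :
    (q.map (· + c)).map (· + (-c)) = q := by
  rw [Multiset.map_map]
  have : ((· + (-c)) ∘ (· + c)) = @id (ZMod (n+1)) := by funext x; simp
  rw [this, Multiset.map_id]

lemma card_PkM (hn : 1 ≤ n) :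
    Nat.card {q : Multiset (ZMod (n+1)) // Multiset.card q = n ∧ PkM n q} * (n+1)
      = (2*n).choose n := by
  classical
  have E : {q : Multiset (ZMod (n+1)) // Multiset.card q = n ∧ PkM n q} × ZMod (n+1) ≃
      {q : Multiset (ZMod (n+1)) // Multiset.card q = n} := by
    refine ⟨fun p => ⟨p.1.1.map (· + p.2), by rw [Multiset.card_map]; exact p.1.2.1⟩,
      fun q => ⟨⟨q.1.map (· + (multkey hn q.1 q.2).choose),
        by rw [Multiset.card_map]; exact q.2, (multkey hn q.1 q.2).choose_spec.1⟩,
        -(multkey hn q.1 q.2).choose⟩, ?_, ?_⟩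
    · rintro ⟨⟨q, hqcard, hqpk⟩, c⟩
      simp only
      have hcard2 : Multiset.card (q.map (· + c)) = n := by
        rw [Multiset.card_map]; exact hqcard
      have hch : (multkey hn (q.map (· + c)) hcard2).choose = -c := by
        refine ((multkey hn (q.map (· + c)) hcard2).choose_spec.2 (-c) ?_).symm
        show PkM n ((q.map (· + c)).map (· + (-c)))
        rw [map_add_neg]
        exact hqpk
      refine Prod.ext ?_ ?_
      · apply Subtype.ext
        simp only [hch]
        exact map_add_neg q c
      · show -(multkey hn (q.map (· + c)) hcard2).choose = c
        rw [hch, neg_neg]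
    · rintro ⟨q, hq⟩
      apply Subtype.ext
      simp only
      exact map_add_neg q _
  have h1 := Nat.card_congr E
  rw [Nat.card_prod] at h1
  have h2 : Nat.card (ZMod (n+1)) = n+1 := by
    rw [Nat.card_eq_fintype_card, ZMod.card]
  have h3 : Nat.card {q : Multiset (ZMod (n+1)) // Multiset.card q = n} = (2*n).choose n := by
    have hrfl : {q : Multiset (ZMod (n+1)) // Multiset.card q = n} = Sym (ZMod (n+1)) n := rfl
    rw [hrfl, Nat.card_eq_fintype_card, Sym.card_sym_eq_multichoose, ZMod.card,
      Nat.multichoose_eq]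
    congr 1
    omega
  rw [h2, h3] at h1
  exact h1

end Count2

end Stmt5
namespace Stmt5

section Equivs

variable {n : ℕ}

lemma countP_add_not (l : List ℕ) (p : ℕ → Bool) :
    l.countP p + l.countP (fun v => !p v) = l.length := by
  induction l with
  | nil => simp
  | cons a l ih =>
    rw [List.countP_cons, List.countP_cons, List.length_cons, ← ih]
    cases h : p a <;> simp [h] <;> omega

lemma decide_lt_eq (v k : ℕ) : (decide (v < k)) = !decide (k ≤ v) := by
  rw [← decide_not]; exact decide_eq_decide.2 (by omega)

/-- The two forms of the parking function condition. -/
lemma cond_iff {w : List ℕ} (hlen : w.length = n) (hmem : ∀ v ∈ w, v < n) :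
    (∀ p : ℕ, w.countP (fun v => decide (p ≤ v)) ≤ n - p) ↔
      (∀ k, 1 ≤ k → k ≤ n → k ≤ w.countP (fun v => decide (v < k))) := by
  have hsum : ∀ k : ℕ, w.countP (fun v => decide (k ≤ v)) + w.countP (fun v => decide (v < k))
      = n := by
    intro k
    have := countP_add_not w (fun v => decide (k ≤ v))
    rw [hlen] at this
    rw [← this]
    congr 1
    apply List.countP_congr
    intro v _
    rw [decide_lt_eq]
  constructor
  · intro h k h1 h2
    have h3 := h k
    have h4 := hsum k
    omega
  · intro h p
    rcases Nat.eq_zero_or_pos p with rfl | hp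
    · rw [hlen.symm]
      simp [List.countP_le_length]
    rcases le_or_gt p n with hpn | hpn
    · have h3 := h p hp hpn
      have h4 := hsum p
      omega
    · have : w.countP (fun v => decide (p ≤ v)) = 0 := by
        rw [List.countP_eq_zero]
        intro v hv
        simp only [decide_eq_true_eq]
        have := hmem v hv
        omega
      omega

lemma countP_eq_card_filter {w : List ℕ} (P : ℕ → Prop) [DecidablePred P] :
    ∀ {m : ℕ}, w.length = m →
      w.countP (fun v => decide (P v)) =
        (Finset.univ.filter (fun i : Fin m => P (w.getD i 0))).card := by
  induction w with
  | nil =>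
    rintro m rfl
    simp
  | cons a w ih =>
    rintro m rfl
    rw [List.countP_cons, Finset.card_filter]
    simp only [List.length_cons]
    rw [Fin.sum_univ_succ]
    have h0 : ((a :: w).getD ((0 : Fin (w.length+1)) : ℕ) 0) = a := rfl
    have hs : ∀ i : Fin w.length, ((a :: w).getD ((i.succ : Fin (w.length+1)) : ℕ) 0)
        = w.getD i 0 := by
      intro i
      rfl
    rw [h0]
    have h2 : ∑ i : Fin w.length, (if P ((a :: w).getD ((i.succ : Fin (w.length+1)) : ℕ) 0)
        then 1 else 0) = ∑ i : Fin w.length, (if P (w.getD i 0) then 1 else 0) := by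
      apply Finset.sum_congr rfl
      intro i _
      rw [hs i]
    rw [h2, ← Finset.card_filter, ← ih rfl]
    by_cases h : P a <;> simp [h] <;> omega

/-- Lists encoding parking functions are equivalent to `Pk` functions. -/
noncomputable def equivA (hn : 1 ≤ n) : {w : List ℕ // GoodU n w} ≃ {g : Fin n → ZMod (n+1) // Pk n g} := by
  refine ⟨fun w => ⟨fun i => ((w.1.getD i 0 : ℕ) : ZMod (n+1)), ?_⟩,
    fun g => ⟨List.ofFn (fun i => (g.1 i).val), ?_⟩, ?_, ?_⟩
  · -- Pk
    obtain ⟨w, hwlen, hwmem, hwcnt⟩ := w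
    intro k h1 h2
    have hval : ∀ i : Fin n, ((w.getD (i:ℕ) 0 : ℕ) : ZMod (n+1)).val = w.getD (i:ℕ) 0 := by
      intro i
      have hmem : w.getD (i:ℕ) 0 ∈ w := by
        have hi : (i : ℕ) < w.length := by rw [hwlen]; exact i.isLt
        rw [List.getD_eq_getElem w 0 hi]
        exact List.getElem_mem hi
      exact ZMod.val_cast_of_lt (by have := hwmem _ hmem; omega)
    have hfe : (Finset.univ.filter (fun i : Fin n => ((w.getD (i:ℕ) 0 : ℕ) : ZMod (n+1)).val < k))
        = (Finset.univ.filter (fun i : Fin n => w.getD (i:ℕ) 0 < k)) := by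
      apply Finset.filter_congr
      intro i _
      rw [hval i]
    rw [hfe, ← countP_eq_card_filter (fun v => v < k) hwlen]
    exact (cond_iff hwlen hwmem).1 hwcnt k h1 h2
  · -- GoodU
    obtain ⟨g, hg⟩ := g
    have hvlt : ∀ i, (g i).val < n := by
      have hcard : (Finset.univ.filter (fun i : Fin n => (g i).val < n)).card
          = Fintype.card (Fin n) := by
        rw [Fintype.card_fin]
        have h1 := hg n hn (le_refl n)
        have h2 : (Finset.univ.filter (fun i : Fin n => (g i).val < n)).card ≤ n := by
          have h3 := Finset.card_le_univ (Finset.univ.filter (fun i : Fin n => (g i).val < n))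
          simpa using h3
        omega
      have huniv := Finset.eq_univ_of_card _ hcard
      intro i
      have : i ∈ Finset.univ.filter (fun i : Fin n => (g i).val < n) := by
        rw [huniv]; exact Finset.mem_univ i
      exact (Finset.mem_filter.1 this).2
    have hlen : (List.ofFn (fun i => (g i).val)).length = n := List.length_ofFn
    have hgetD : ∀ i : Fin n, (List.ofFn (fun i => (g i).val)).getD (i:ℕ) 0 = (g i).val := by
      intro i
      have hi : (i:ℕ) < (List.ofFn (fun i => (g i).val)).length := by rw [hlen]; exact i.isLt
      rw [List.getD_eq_getElem _ 0 hi, List.getElem_ofFn]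
    have hmem : ∀ v ∈ List.ofFn (fun i => (g i).val), v < n := by
      intro v hv
      rw [List.mem_ofFn] at hv
      obtain ⟨i, rfl⟩ := hv
      exact hvlt i
    refine ⟨hlen, hmem, ?_⟩
    apply (cond_iff hlen hmem).2
    intro k h1 h2
    rw [countP_eq_card_filter (fun v => v < k) hlen]
    have hfe : (Finset.univ.filter
        (fun i : Fin n => (List.ofFn (fun i => (g i).val)).getD (i:ℕ) 0 < k))
        = (Finset.univ.filter (fun i : Fin n => (g i).val < k)) := by
      apply Finset.filter_congr
      intro i _
      rw [hgetD i]
    rw [hfe]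
    exact hg k h1 h2
  · -- left inverse
    rintro ⟨w, hwlen, hwmem, hwcnt⟩
    apply Subtype.ext
    simp only
    apply List.ext_getElem
    · rw [List.length_ofFn, hwlen]
    · intro i hi1 hi2
      have hi : i < n := by rwa [List.length_ofFn] at hi1
      have hiw : i < w.length := by rw [hwlen]; exact hi
      rw [List.getElem_ofFn]
      show ((w.getD i 0 : ℕ) : ZMod (n+1)).val = w[i]
      rw [List.getD_eq_getElem w 0 hiw]
      exact ZMod.val_cast_of_lt (by have h9 := hwmem _ (List.getElem_mem hiw); omega)
  · -- right inverse
    rintro ⟨g, hg⟩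
    apply Subtype.ext
    funext i
    simp only
    have hlen : (List.ofFn (fun i => (g i).val)).length = n := List.length_ofFn
    have hi : (i:ℕ) < (List.ofFn (fun i => (g i).val)).length := by rw [hlen]; exact i.isLt
    rw [List.getD_eq_getElem _ 0 hi, List.getElem_ofFn]
    exact ZMod.natCast_rightInverse (g i)

end Equivs

end Stmt5
namespace Stmt5

section EquivB

variable {n : ℕ}

lemma sum_count_coe (l : List ℕ) (hmem : ∀ v ∈ l, v < n+1) (k : ℕ) (hk : k ≤ n+1) :
    ∑ j ∈ Finset.range k, Multiset.count ((j:ℕ) : ZMod (n+1))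
      ((l.map (fun v : ℕ => ((v:ℕ) : ZMod (n+1))) : List (ZMod (n+1))) : Multiset (ZMod (n+1)))
      = l.countP (fun v => decide (v < k)) := by
  induction l with
  | nil => simp
  | cons a l ih =>
    have hma : a < n+1 := hmem a (by simp)
    have hcoe : ((((a :: l).map (fun v : ℕ => ((v:ℕ) : ZMod (n+1)))) : List (ZMod (n+1))) :
        Multiset (ZMod (n+1))) = ((a:ℕ) : ZMod (n+1)) ::ₘ
          ((l.map (fun v : ℕ => ((v:ℕ) : ZMod (n+1))) : List (ZMod (n+1))) :
            Multiset (ZMod (n+1))) := rfl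
    rw [hcoe]
    have hstep : ∀ j ∈ Finset.range k,
        Multiset.count ((j:ℕ) : ZMod (n+1)) (((a:ℕ) : ZMod (n+1)) ::ₘ
          ((l.map (fun v : ℕ => ((v:ℕ) : ZMod (n+1))) : List (ZMod (n+1))) :
            Multiset (ZMod (n+1))))
        = Multiset.count ((j:ℕ) : ZMod (n+1))
          ((l.map (fun v : ℕ => ((v:ℕ) : ZMod (n+1))) : List (ZMod (n+1))) :
            Multiset (ZMod (n+1))) + (if j = a then 1 else 0) := by
      intro j hj
      rw [Multiset.count_cons]
      congr 1
      have hj' : j < n+1 := by rw [Finset.mem_range] at hj; omega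
      have hiff : ((j:ℕ) : ZMod (n+1)) = ((a:ℕ) : ZMod (n+1)) ↔ j = a := by
        constructor
        · intro h
          rw [← ZMod.val_cast_of_lt hj', h, ZMod.val_cast_of_lt hma]
        · intro h; rw [h]
      exact if_congr hiff rfl rfl
    rw [Finset.sum_congr rfl hstep, Finset.sum_add_distrib,
      ih (fun v hv => hmem v (by simp [hv])), Finset.sum_ite_eq' (Finset.range k) a fun _ => 1,
      List.countP_cons]
    simp only [Finset.mem_range, decide_eq_true_eq]

lemma hvals_lemma (hn : 1 ≤ n) (q : Multiset (ZMod (n+1))) (hqcard : Multiset.card q = n)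
    (hqpk : PkM n q) : ∀ r ∈ q, r.val < n := by
  have hsum_all : ∑ j ∈ Finset.range (n+1), q.count ((j:ℕ) : ZMod (n+1)) = n := by
    rw [sum_range_card (fun r => q.count r), msum_count, hqcard]
  have h1 := hqpk n hn (le_refl n)
  have htop : q.count ((n:ℕ) : ZMod (n+1)) = 0 := by
    rw [Finset.sum_range_succ] at hsum_all
    omega
  intro r hr
  have hlt : r.val < n+1 := ZMod.val_lt r
  rcases Nat.lt_or_ge r.val n with h | h
  · exact h
  · exfalso
    have hrn : r.val = n := by omega
    have hre : r = ((n:ℕ) : ZMod (n+1)) := by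
      have h5 : ((r.val : ℕ) : ZMod (n+1)) = r := ZMod.natCast_rightInverse r
      rw [hrn] at h5
      exact h5.symm
    have := Multiset.count_pos.2 hr
    rw [hre] at this
    omega

lemma htf_lemma (hn : 1 ≤ n) (q : Multiset (ZMod (n+1))) (hqcard : Multiset.card q = n)
    (hqpk : PkM n q) :
    ((((q.map ZMod.val).sort (·≤·)).map (fun v : ℕ => ((v:ℕ) : ZMod (n+1))) :
      List (ZMod (n+1))) : Multiset (ZMod (n+1))) = q := by
  have h1 : ((((q.map ZMod.val).sort (·≤·)).map (fun v : ℕ => ((v:ℕ) : ZMod (n+1))) :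
      List (ZMod (n+1))) : Multiset (ZMod (n+1)))
      = (((q.map ZMod.val).sort (·≤·) : List ℕ) : Multiset ℕ).map
          (fun v : ℕ => ((v:ℕ) : ZMod (n+1))) := rfl
  rw [h1, Multiset.sort_eq, Multiset.map_map]
  calc q.map ((fun v : ℕ => ((v:ℕ) : ZMod (n+1))) ∘ ZMod.val)
      = q.map id := Multiset.map_congr rfl (fun r _ => ZMod.natCast_rightInverse r)
    _ = q := Multiset.map_id q

lemma sortq_goodU (hn : 1 ≤ n) (q : Multiset (ZMod (n+1))) (hqcard : Multiset.card q = n)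
    (hqpk : PkM n q) : GoodU n ((q.map ZMod.val).sort (·≤·)) := by
  set w' := (q.map ZMod.val).sort (·≤·) with hw'
  have hw'len : w'.length = n := by rw [hw', Multiset.length_sort, Multiset.card_map, hqcard]
  have hw'mem : ∀ v ∈ w', v < n := by
    intro v hv
    have h2 : v ∈ ((w' : List ℕ) : Multiset ℕ) := by exact_mod_cast hv
    rw [hw', Multiset.sort_eq] at h2
    obtain ⟨r, hr, rfl⟩ := Multiset.mem_map.1 h2
    exact hvals_lemma hn q hqcard hqpk r hr
  refine ⟨hw'len, hw'mem, ?_⟩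
  apply (cond_iff hw'len hw'mem).2
  intro k h1 h2
  rw [← sum_count_coe w' (fun v hv => Nat.lt_succ_of_lt (hw'mem v hv)) k (by omega)]
  have h3 : ((w'.map (fun v : ℕ => ((v:ℕ) : ZMod (n+1))) : List (ZMod (n+1))) :
      Multiset (ZMod (n+1))) = q := htf_lemma hn q hqcard hqpk
  have h5 : ∑ j ∈ Finset.range k, Multiset.count ((j:ℕ) : ZMod (n+1))
      (((w'.map (fun v : ℕ => ((v:ℕ) : ZMod (n+1))) : List (ZMod (n+1)))) : Multiset (ZMod (n+1)))
      = ∑ j ∈ Finset.range k, Multiset.count ((j:ℕ) : ZMod (n+1)) q :=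
    Finset.sum_congr rfl (fun j _ => congrArg (Multiset.count _) h3)
  exact le_trans (hqpk k h1 h2) (le_of_eq h5.symm)

noncomputable def equivB (hn : 1 ≤ n) :
    {w : List ℕ // GoodU n w ∧ w.Pairwise (·≤·)} ≃
      {q : Multiset (ZMod (n+1)) // Multiset.card q = n ∧ PkM n q} := by
  refine ⟨fun w => ⟨((w.1.map (fun v : ℕ => ((v:ℕ) : ZMod (n+1))) : List (ZMod (n+1))) :
      Multiset (ZMod (n+1))), ?_, ?_⟩,
    fun q => ⟨(q.1.map ZMod.val).sort (·≤·),
      sortq_goodU hn q.1 q.2.1 q.2.2, Multiset.pairwise_sort _ _⟩, ?_, ?_⟩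
  · -- card
    obtain ⟨w, ⟨hwlen, hwmem, hwcnt⟩, hsort⟩ := w
    simp only [Multiset.coe_card, List.length_map]
    exact hwlen
  · -- PkM
    obtain ⟨w, ⟨hwlen, hwmem, hwcnt⟩, hsort⟩ := w
    intro k h1 h2
    rw [sum_count_coe w (fun v hv => by have := hwmem v hv; omega) k (by omega)]
    exact (cond_iff hwlen hwmem).1 hwcnt k h1 h2
  · -- left inverse
    rintro ⟨w, ⟨hwlen, hwmem, hwcnt⟩, hsort⟩
    apply Subtype.ext
    simp only
    have hE1 : (((w.map (fun v : ℕ => ((v:ℕ) : ZMod (n+1))) : List (ZMod (n+1))) :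
        Multiset (ZMod (n+1))).map ZMod.val) = ((w : List ℕ) : Multiset ℕ) := by
      have h2 : (((w.map (fun v : ℕ => ((v:ℕ) : ZMod (n+1))) : List (ZMod (n+1))) :
          Multiset (ZMod (n+1))).map ZMod.val)
          = ((w.map ((ZMod.val (n := n+1)) ∘ (fun v : ℕ => ((v:ℕ) : ZMod (n+1)))) : List ℕ) :
            Multiset ℕ) := by
        rw [show (((w.map (fun v : ℕ => ((v:ℕ) : ZMod (n+1))) : List (ZMod (n+1))) :
            Multiset (ZMod (n+1))).map ZMod.val)
            = (((w.map (fun v : ℕ => ((v:ℕ) : ZMod (n+1)))).map ZMod.val : List ℕ) :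
              Multiset ℕ) from rfl, List.map_map]
      rw [h2]
      congr 1
      have h3 : w.map ((ZMod.val (n := n+1)) ∘ (fun v : ℕ => ((v:ℕ) : ZMod (n+1))))
          = w.map id := by
        apply List.map_congr_left
        intro v hv
        exact ZMod.val_cast_of_lt (by have := hwmem v hv; omega)
      rw [h3, List.map_id]
    rw [hE1]
    exact List.Perm.eq_of_pairwise' (Multiset.pairwise_sort _ _) hsort
      (Multiset.coe_eq_coe.1 (Multiset.sort_eq _ _))
  · -- right inverse
    rintro ⟨q, hqcard, hqpk⟩
    apply Subtype.ext
    simp only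
    exact htf_lemma hn q hqcard hqpk

end EquivB

end Stmt5
/-- for `y = (b, a^{n−1})` with `a ∣ b` or `b > (n−1)a`,
`|PAinv_n(y)| = (n+1)^{n−1}` and `|PAinv↑_n(y)| = C_n = (1/(n+1))·binom(2n, n)`. -/
theorem stmt5 (n a b : ℕ) (hn : 2 ≤ n) (ha : 0 < a) (hb : 0 < b)
    (y : List ℕ) (hy : y = b :: List.replicate (n - 1) a)
    (h : a ∣ b ∨ (n - 1) * a < b) :
    Set.ncard {x : List ℕ | PAinv y x} = (n + 1) ^ (n - 1) ∧
      Set.ncard {x : List ℕ | PAinv y x ∧ x.Pairwise (· ≤ ·)} =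
        (2 * n).choose n / (n + 1) := by
  subst hy
  have hn1 : 1 ≤ n := by omega
  have hinj : Function.Injective (fun w : List ℕ => w.map (fun k => k*a+1)) := by
    apply List.map_injective_iff.2
    intro k k' hk
    exact Nat.eq_of_mul_eq_mul_right ha (Nat.add_right_cancel hk)
  constructor
  · have hset : {x : List ℕ | PAinv (b :: List.replicate (n-1) a) x}
        = (fun w : List ℕ => w.map (fun k => k*a+1)) '' {w | Stmt5.GoodU n w} := by
      ext x
      rw [Set.mem_image]
      simp only [Set.mem_setOf_eq]
      rw [Stmt5.painv_iff hn ha hb h x]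
      constructor
      · rintro ⟨w, hw, rfl⟩; exact ⟨w, hw, rfl⟩
      · rintro ⟨w, hw, rfl⟩; exact ⟨w, hw, rfl⟩
    rw [hset, Set.ncard_image_of_injective _ hinj]
    have hcard : Set.ncard {w : List ℕ | Stmt5.GoodU n w}
        = Nat.card {w : List ℕ // Stmt5.GoodU n w} := rfl
    rw [hcard, Nat.card_congr (Stmt5.equivA hn1)]
    have h1 := Stmt5.card_Pk (n := n) hn1
    have h2 : (n+1)^n = (n+1)^(n-1) * (n+1) := by
      rw [← pow_succ]
      congr 1
      omega
    rw [h2] at h1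
    exact Nat.eq_of_mul_eq_mul_right (by omega) h1
  · have hset : {x : List ℕ | PAinv (b :: List.replicate (n-1) a) x ∧ x.Pairwise (· ≤ ·)}
        = (fun w : List ℕ => w.map (fun k => k*a+1)) ''
            {w | Stmt5.GoodU n w ∧ w.Pairwise (· ≤ ·)} := by
      ext x
      rw [Set.mem_image]
      simp only [Set.mem_setOf_eq]
      constructor
      · rintro ⟨hpa, hsort⟩
        obtain ⟨w, hw, rfl⟩ := (Stmt5.painv_iff hn ha hb h x).1 hpa
        refine ⟨w, ⟨hw, ?_⟩, rfl⟩
        have h3 := (List.pairwise_map).1 hsort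
        exact h3.imp (fun hab => Nat.le_of_mul_le_mul_right (Nat.le_of_succ_le_succ hab) ha)
      · rintro ⟨w, ⟨hw, hsort⟩, rfl⟩
        refine ⟨(Stmt5.painv_iff hn ha hb h _).2 ⟨w, hw, rfl⟩, ?_⟩
        apply List.pairwise_map.2
        exact hsort.imp (fun hab => Nat.add_le_add_right (Nat.mul_le_mul_right a hab) 1)
    rw [hset, Set.ncard_image_of_injective _ hinj]
    have hcard : Set.ncard {w : List ℕ | Stmt5.GoodU n w ∧ w.Pairwise (· ≤ ·)}
        = Nat.card {w : List ℕ // Stmt5.GoodU n w ∧ w.Pairwise (· ≤ ·)} := rfl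
    rw [hcard, Nat.card_congr (Stmt5.equivB hn1)]
    have h1 := Stmt5.card_PkM (n := n) hn1
    exact (Nat.div_eq_of_eq_mul_left (by omega) h1.symm).symm
end

section
/- Let y = (b, a, a, ..., a) ∈ ℕ^n with n ≥ 2, and let x = (x_1,...,x_n) ∈ [m]^n where m = b + (n−1)a. If x ∈ PAinv_n(y), then x_i ≡ 1 (mod a) for every i ∈ [n]. -/
lemma park_count (m a v : ℕ) (hv : 1 ≤ v) :
    ∀ (l : List (ℕ × ℕ)) (occ : Finset ℕ),
      Park m occ l →
      (∀ p ∈ l, p.2 = a ∧ 1 ≤ p.1) →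
      v ∈ occ → occ ⊆ Finset.Icc 1 m →
      a ∣ (occ ∩ Finset.Ico 1 v).card →
      occ.card + l.length * a = m →
      a ∣ (v - 1) := by
  intro l
  induction l with
  | nil =>
    intro occ _ _ hvocc hsub hdvd hcard
    simp only [List.length_nil, Nat.zero_mul, Nat.add_zero] at hcard
    have hocc : occ = Finset.Icc 1 m := by
      apply Finset.eq_of_subset_of_card_le hsub
      simp [Nat.card_Icc, hcard]
    have hvm : v ≤ m := by
      have := hsub hvocc
      simp only [Finset.mem_Icc] at this
      exact this.2
    have hi : occ ∩ Finset.Ico 1 v = Finset.Ico 1 v := by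
      rw [hocc]
      apply Finset.inter_eq_right.mpr
      intro t ht
      simp only [Finset.mem_Ico] at ht
      simp only [Finset.mem_Icc]
      omega
    rw [hi] at hdvd
    simpa [Nat.card_Ico] using hdvd
  | cons p rest ih =>
    obtain ⟨pref, len⟩ := p
    intro occ hpark hall hvocc hsub hdvd hcard
    cases hpark with
    | cons _ _ _ _ s hparks hrest =>
      obtain ⟨hlen, hpref1⟩ := hall (pref, len) List.mem_cons_self
      simp only at hlen
      subst len
      obtain ⟨⟨hps, hsm, hfree⟩, _⟩ := hparks
      have hdisj : Disjoint occ (Finset.Ico s (s + a)) := by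
        rw [Finset.disjoint_right]
        intro t ht
        exact hfree t ht
      have hvs : v ∉ Finset.Ico s (s + a) :=
        fun h => (hfree v h) hvocc
      have hcard' : (occ ∪ Finset.Ico s (s + a)).card = occ.card + a := by
        rw [Finset.card_union_of_disjoint hdisj, Nat.card_Ico]
        omega
      have hsub' : occ ∪ Finset.Ico s (s + a) ⊆ Finset.Icc 1 m := by
        apply Finset.union_subset hsub
        intro t ht
        simp only [Finset.mem_Ico] at ht
        simp only [Finset.mem_Icc]
        omega
      have hidist : (occ ∪ Finset.Ico s (s + a)) ∩ Finset.Ico 1 v =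
          (occ ∩ Finset.Ico 1 v) ∪ (Finset.Ico s (s + a) ∩ Finset.Ico 1 v) :=
        Finset.union_inter_distrib_right _ _ _
      have hdvd' : a ∣ ((occ ∪ Finset.Ico s (s + a)) ∩ Finset.Ico 1 v).card := by
        rw [hidist, Finset.card_union_of_disjoint
          (Finset.disjoint_of_subset_left Finset.inter_subset_left
            (Finset.disjoint_of_subset_right Finset.inter_subset_left hdisj))]
        apply Nat.dvd_add hdvd
        simp only [Finset.mem_Ico, not_and, not_lt] at hvs
        rcases lt_or_ge v s with hcase | hcase
        · have : Finset.Ico s (s + a) ∩ Finset.Ico 1 v = ∅ := by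
            rw [Finset.eq_empty_iff_forall_notMem]
            intro t ht
            simp only [Finset.mem_inter, Finset.mem_Ico] at ht
            omega
          simp [this]
        · have hsa : s + a ≤ v := hvs hcase
          have : Finset.Ico s (s + a) ∩ Finset.Ico 1 v = Finset.Ico s (s + a) := by
            apply Finset.inter_eq_left.mpr
            intro t ht
            simp only [Finset.mem_Ico] at ht ⊢
            omega
          rw [this, Nat.card_Ico]
          simp
      exact ih (occ ∪ Finset.Ico s (s + a)) hrest
        (fun p hp => hall p (List.mem_cons_of_mem _ hp))
        (Finset.mem_union_left _ hvocc) hsub' hdvd'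
        (by simp only [List.length_cons, Nat.add_mul, Nat.one_mul] at hcard; rw [hcard']; omega)

/-- for `y = (b, a^{n−1})`, if `x ∈ PAinv_n(y)` then every entry of `x`
is congruent to 1 modulo `a`. -/
theorem stmt7 (n a b : ℕ) (hn : 2 ≤ n) (ha : 0 < a) (hb : 0 < b)
    (y : List ℕ) (hy : y = b :: List.replicate (n - 1) a)
    (x : List ℕ) (hxlen : x.length = n)
    (hxm : ∀ v ∈ x, 1 ≤ v ∧ v ≤ b + (n - 1) * a)
    (hx : PAinv y x) :
    ∀ v ∈ x, v ≡ 1 [MOD a] := by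
  intro v hvx
  have hv1 : 1 ≤ v := (hxm v hvx).1
  set m := b + (n - 1) * a with hm
  have hysum : y.sum = m := by
    simp [hy, List.sum_replicate, smul_eq_mul, hm]
  have hperm : x.Perm (v :: x.erase v) := List.perm_cons_erase hvx
  obtain ⟨hlen', hmem', hpark'⟩ := hx _ hperm
  rw [hy] at hpark'
  simp only [List.zip_cons_cons] at hpark'
  rw [show (b :: List.replicate (n-1) a).sum = m by
    simp [List.sum_replicate, smul_eq_mul, hm]] at hpark'
  cases hpark' with
  | cons _ _ _ _ s hparks hrest =>
    obtain ⟨⟨hvs, hsm, _⟩, hmin⟩ := hparks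
    have hsv : s = v := by
      by_contra h
      have hlt : v < s := lt_of_le_of_ne hvs (Ne.symm h)
      exact hmin v hlt ⟨le_refl v, by omega, by simp⟩
    subst hsv
    rw [Finset.empty_union] at hrest
    have herlen : (x.erase s).length = n - 1 := by
      rw [List.length_erase_of_mem hvx, hxlen]
    have hziplen : ((x.erase s).zip (List.replicate (n-1) a)).length = n - 1 := by
      rw [List.length_zip, herlen, List.length_replicate, Nat.min_self]
    have hdvd : a ∣ (s - 1) := by
      apply park_count m a s hv1 _ _ hrest
      · rintro ⟨p1, p2⟩ hp
        obtain ⟨h1, h2⟩ := List.of_mem_zip hp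
        refine ⟨List.eq_of_mem_replicate h2, ?_⟩
        exact (hxm p1 (List.mem_of_mem_erase h1)).1
      · simp only [Finset.mem_Ico]
        omega
      · intro t ht
        simp only [Finset.mem_Ico] at ht
        simp only [Finset.mem_Icc]
        omega
      · have : Finset.Ico s (s + b) ∩ Finset.Ico 1 s = ∅ := by
          rw [Finset.eq_empty_iff_forall_notMem]
          intro t ht
          simp only [Finset.mem_inter, Finset.mem_Ico] at ht
          omega
        simp [this]
      · rw [Nat.card_Ico, hziplen]
        omega
    exact ((Nat.modEq_iff_dvd' hv1).mpr hdvd).symm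
end

section
/- Let y = (b, a, a, ..., a) ∈ ℕ^n with n ≥ 2, and let x = (x_1,...,x_n) ∈ [m]^n where m = b + (n−1)a. If x ∈ PAinv_n(y), then the i-th smallest entry satisfies x_{(i)} ≤ 1 + (i−1)a for every i ∈ [n]. -/
/-- Auxiliary: from a `Park` derivation, extract the final occupied set and
its counting properties. -/
lemma park_aux (m : ℕ) : ∀ (l : List (ℕ × ℕ)) (occ : Finset ℕ), Park m occ l →
    (∀ p ∈ l, 1 ≤ p.1) →
    ∃ occ' : Finset ℕ, occ ⊆ occ' ∧ occ' ⊆ occ ∪ Finset.Icc 1 m ∧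
      occ'.card = occ.card + (l.map Prod.snd).sum ∧
      ∀ c, (occ' ∩ Finset.Icc 1 c).card ≤
        (occ ∩ Finset.Icc 1 c).card + (((l.filter (fun p => p.1 ≤ c)).map Prod.snd).sum) := by
  intro l occ h
  induction h with
  | nil occ =>
      intro _
      exact ⟨occ, subset_rfl, Finset.subset_union_left, by simp, fun c => by simp⟩
  | cons occ pref len rest s hs hrest ih =>
      intro hpref
      have hpref1 : 1 ≤ pref := hpref (pref, len) (by simp)
      obtain ⟨hfit, _⟩ := hs
      obtain ⟨hps, hsm, hfree⟩ := hfit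
      set I : Finset ℕ := Finset.Ico s (s + len) with hI
      have hdisj : Disjoint occ I := by
        rw [Finset.disjoint_right]
        exact fun t ht => hfree t ht
      have hIsub : I ⊆ Finset.Icc 1 m := by
        intro t ht
        rw [hI, Finset.mem_Ico] at ht
        rw [Finset.mem_Icc]
        omega
      obtain ⟨occ', h1, h2, h3, h4⟩ := ih (fun p hp => hpref p (by simp [hp]))
      refine ⟨occ', Finset.subset_union_left.trans h1, ?_, ?_, ?_⟩
      · intro t ht
        have := h2 ht
        rw [Finset.mem_union] at this ⊢
        rcases this with h | h
        · rw [Finset.mem_union] at h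
          rcases h with h | h
          · exact Or.inl h
          · exact Or.inr (hIsub h)
        · exact Or.inr h
      · rw [h3, Finset.card_union_of_disjoint hdisj]
        have : I.card = len := by simp [hI]
        rw [this]
        simp [add_assoc]
      · intro c
        have hmain := h4 c
        have hsplit : ((occ ∪ I) ∩ Finset.Icc 1 c) =
            (occ ∩ Finset.Icc 1 c) ∪ (I ∩ Finset.Icc 1 c) := Finset.union_inter_distrib_right ..
        by_cases hc : pref ≤ c
        · have hle : ((occ ∪ I) ∩ Finset.Icc 1 c).card ≤
              (occ ∩ Finset.Icc 1 c).card + len := by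
            rw [hsplit]
            refine (Finset.card_union_le _ _).trans ?_
            have : (I ∩ Finset.Icc 1 c).card ≤ len := by
              refine (Finset.card_le_card (Finset.inter_subset_left)).trans ?_
              simp [hI]
            omega
          have hfil : ((((pref, len) :: rest).filter (fun p => p.1 ≤ c)).map Prod.snd).sum
              = len + ((rest.filter (fun p => p.1 ≤ c)).map Prod.snd).sum := by
            simp [List.filter_cons, hc]
          rw [hfil]
          omega
        · have hIe : I ∩ Finset.Icc 1 c = ∅ := by
            rw [Finset.eq_empty_iff_forall_notMem]
            intro t ht
            rw [Finset.mem_inter, hI, Finset.mem_Ico, Finset.mem_Icc] at ht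
            omega
          have heq : ((occ ∪ I) ∩ Finset.Icc 1 c) = occ ∩ Finset.Icc 1 c := by
            rw [hsplit, hIe, Finset.union_empty]
          rw [heq] at hmain
          have hfil : ((((pref, len) :: rest).filter (fun p => p.1 ≤ c)).map Prod.snd).sum
              = ((rest.filter (fun p => p.1 ≤ c)).map Prod.snd).sum := by
            simp [List.filter_cons, hc]
          rw [hfil]
          omega

/-- for `y = (b, a^{n−1})`, if `x ∈ PAinv_n(y)` then the `i`-th smallest
entry of `x` is at most `1 + (i−1)a`. Here `xs` is the nondecreasing rearrangement
of `x`, indexed 0-based: `xs.getD i 0 ≤ 1 + i·a`. -/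
theorem stmt8 (n a b : ℕ) (hn : 2 ≤ n) (ha : 0 < a) (hb : 0 < b)
    (y : List ℕ) (hy : y = b :: List.replicate (n - 1) a)
    (x : List ℕ) (hxlen : x.length = n)
    (hxm : ∀ v ∈ x, 1 ≤ v ∧ v ≤ b + (n - 1) * a)
    (xs : List ℕ) (hperm : xs.Perm x) (hsort : xs.Pairwise (· ≤ ·))
    (hx : PAinv y x) :
    ∀ i < n, xs.getD i 0 ≤ 1 + i * a := by
  intro i hi
  by_contra hcon
  push_neg at hcon
  have hxslen : xs.length = n := hperm.length_eq.trans hxlen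
  have hilt : i < xs.length := by omega
  have hgd : xs.getD i 0 = xs[i] := List.getD_eq_getElem xs 0 hilt
  set c : ℕ := 1 + i * a with hc
  set m : ℕ := b + (n - 1) * a with hm
  have hysum : y.sum = m := by
    simp [hy, hm, List.sum_replicate, mul_comm]
  have hylen : y.length = n := by
    rw [hy]; simp; omega
  -- the rearranged preference list
  set x' : List ℕ := xs.drop i ++ xs.take i with hx'
  have hx'perm : x.Perm x' := by
    have h1 : (xs.take i ++ xs.drop i).Perm x' := List.perm_append_comm
    rw [List.take_append_drop] at h1
    exact hperm.symm.trans h1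
  obtain ⟨hlen', hbound', hpark⟩ := hx x' hx'perm
  have hx'len : x'.length = n := (hx'perm.length_eq.symm).trans hxlen
  -- all elements of xs.drop i are > c
  have hbig : ∀ v ∈ xs.drop i, c < v := by
    have hd : xs.drop i = xs[i] :: xs.drop (i + 1) := List.drop_eq_getElem_cons hilt
    have hsort' : (xs.drop i).Pairwise (· ≤ ·) := hsort.drop
    intro v hv
    rw [hd] at hv hsort'
    have hhead := (List.pairwise_cons.mp hsort').1
    rcases List.mem_cons.mp hv with h | h
    · subst h; rw [hgd] at hcon; exact hcon
    · have := hhead v h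
      rw [hgd] at hcon
      omega
  -- split of y
  set y1 : List ℕ := b :: List.replicate (n - 1 - i) a with hy1
  set y2 : List ℕ := List.replicate i a with hy2
  have hysplit : y = y1 ++ y2 := by
    rw [hy, hy1, hy2]
    have : n - 1 = (n - 1 - i) + i := by omega
    rw [this, List.replicate_add]
    simp
  have hy1len : y1.length = n - i := by
    rw [hy1]; simp; omega
  have hdroplen : (xs.drop i).length = n - i := by simp [hxslen]
  have htakelen : (xs.take i).length = i := by simp [hxslen]; omega
  have hzip : x'.zip y = (xs.drop i).zip y1 ++ (xs.take i).zip y2 := by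
    rw [hx', hysplit]
    exact List.zip_append (by rw [hdroplen, hy1len])
  -- preferences are ≥ 1
  have hpref1 : ∀ p ∈ x'.zip y, 1 ≤ p.1 := by
    intro p hp
    exact (hbound' p.1 (List.of_mem_zip hp).1).1
  obtain ⟨occ', h0, hsub, hcard, hcnt⟩ := park_aux y.sum (x'.zip y) ∅ hpark hpref1
  rw [Finset.empty_union] at hsub
  have hmapsnd : (x'.zip y).map Prod.snd = y := by
    apply List.map_snd_zip
    rw [hx'len, hylen]
  have hcard' : occ'.card = m := by
    rw [hcard, hmapsnd, hysum]; simp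
  have hocc' : occ' = Finset.Icc 1 y.sum := by
    apply Finset.eq_of_subset_of_card_le hsub
    rw [hcard', hysum]
    simp
  have hcm : c ≤ m := by
    have h1 : i * a ≤ (n - 1) * a := Nat.mul_le_mul_right a (by omega)
    omega
  -- left side of the counting inequality: all of [1,c] is occupied
  have hleft : (occ' ∩ Finset.Icc 1 c).card = c := by
    have : occ' ∩ Finset.Icc 1 c = Finset.Icc 1 c := by
      rw [hocc', hysum]
      apply Finset.inter_eq_right.mpr
      intro t ht
      rw [Finset.mem_Icc] at ht ⊢
      omega
    rw [this]
    simp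
  -- right side: only the small cars can cover [1,c], total length i*a
  have hfil1 : ((xs.drop i).zip y1).filter (fun p => p.1 ≤ c) = [] := by
    rw [List.filter_eq_nil_iff]
    intro p hp
    have := hbig p.1 (List.of_mem_zip hp).1
    simp only [decide_eq_true_eq]
    omega
  have hmap2 : ((xs.take i).zip y2).map Prod.snd = y2 := by
    apply List.map_snd_zip
    rw [htakelen, hy2]; simp
  have hfil2 : ((((xs.take i).zip y2).filter (fun p => p.1 ≤ c)).map Prod.snd).sum ≤ i * a := by
    have hsl : (((xs.take i).zip y2).filter (fun p => p.1 ≤ c)).Sublist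
        ((xs.take i).zip y2) := List.filter_sublist
    have hsl2 := hsl.map Prod.snd
    have := hsl2.sum_le_sum (by intro a _; exact Nat.zero_le a)
    rw [hmap2, hy2] at this
    simpa using this
  have hright : (((x'.zip y).filter (fun p => p.1 ≤ c)).map Prod.snd).sum ≤ i * a := by
    rw [hzip, List.filter_append, hfil1, List.nil_append]
    exact hfil2
  have := hcnt c
  rw [hleft] at this
  simp only [Finset.empty_inter, Finset.card_empty, Nat.zero_add] at this
  omega
end

section
/- Let y = (y_1, y_2, ..., y_n) be a vector of n positive integer car lengths with n ≥ 2. If the characteristic χ(y) equals n−1, then y_2 = y_3 = ... = y_n. -/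
lemma list_exists_min : ∀ (l : List ℕ), l ≠ [] → ∃ w ∈ l, ∀ v ∈ l, w ≤ v := by
  intro l
  induction l with
  | nil => simp
  | cons a t ih =>
    intro _
    rcases eq_or_ne t [] with rfl | ht
    · exact ⟨a, by simp, by simp⟩
    · obtain ⟨w, hw, hmin⟩ := ih ht
      rcases le_total a w with h | h
      · refine ⟨a, by simp, ?_⟩
        intro v hv
        rcases List.mem_cons.1 hv with rfl | hv
        · exact le_refl _
        · exact le_trans h (hmin v hv)
      · refine ⟨w, List.mem_cons_of_mem _ hw, ?_⟩
        intro v hv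
        rcases List.mem_cons.1 hv with rfl | hv
        · exact h
        · exact hmin v hv


lemma fin_lemma (m : ℕ) : ∀ (l : List (ℕ × ℕ)) (occ : Finset ℕ),
    Park m occ l → occ ⊆ Finset.Icc 1 m → (∀ pc ∈ l, 1 ≤ pc.1) →
    ∃ occF : Finset ℕ, occ ⊆ occF ∧ occF ⊆ Finset.Icc 1 m ∧
      occF.card = occ.card + (l.map Prod.snd).sum ∧
      ∀ t ∈ occF, t ∈ occ ∨ ∃ pc ∈ l, pc.1 ≤ t := by
  intro l
  induction l with
  | nil =>
    intro occ _ hsub _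
    exact ⟨occ, Finset.Subset.rfl, hsub, by simp, fun t ht => Or.inl ht⟩
  | cons pc0 rest ih =>
    obtain ⟨p, len⟩ := pc0
    intro occ hpark hsub hpref
    cases hpark with
    | cons _ _ _ _ s hps hrest =>
      obtain ⟨⟨hp_le, hs_le, hdisj⟩, _⟩ := hps
      have hp1 : 1 ≤ p := hpref (p, len) (List.mem_cons_self)
      have hsub' : occ ∪ Finset.Ico s (s + len) ⊆ Finset.Icc 1 m := by
        intro t ht
        rcases Finset.mem_union.1 ht with h | h
        · exact hsub h
        · rw [Finset.mem_Ico] at h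
          exact Finset.mem_Icc.2 ⟨le_trans hp1 (le_trans hp_le h.1), by omega⟩
      obtain ⟨occF, h1, h2, h3, h4⟩ := ih (occ ∪ Finset.Ico s (s + len)) hrest hsub'
        (fun pc h => hpref pc (List.mem_cons_of_mem _ h))
      have hdisj' : Disjoint occ (Finset.Ico s (s + len)) := by
        rw [Finset.disjoint_right]
        intro a ha
        exact hdisj a ha
      refine ⟨occF, Finset.Subset.trans Finset.subset_union_left h1, h2, ?_, ?_⟩
      · rw [h3, Finset.card_union_of_disjoint hdisj', Nat.card_Ico]
        simp
        omega
      · intro t ht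
        rcases h4 t ht with h | ⟨pc', hpc', hle⟩
        · rcases Finset.mem_union.1 h with h | h
          · exact Or.inl h
          · exact Or.inr ⟨(p, len), List.mem_cons_self,
              le_trans hp_le (Finset.mem_Ico.1 h).1⟩
        · exact Or.inr ⟨pc', List.mem_cons_of_mem _ hpc', hle⟩

lemma main_lemma (m w : ℕ) (hw : 2 ≤ w) : ∀ (l : List (ℕ × ℕ)) (occ : Finset ℕ),
    Park m occ l → occ ⊆ Finset.Icc 1 m →
    occ.card + (l.map Prod.snd).sum = m →
    (∀ t, t < w → t ∉ occ) → w ∈ occ →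
    (∀ pc ∈ l, pc.1 = 1 ∨ w ≤ pc.1) →
    l.countP (fun pc => pc.1 = 1) = 1 →
    ∀ pc ∈ l, pc.1 = 1 → pc.2 = w - 1 := by
  intro l
  induction l with
  | nil => intro occ _ _ _ _ _ _ _ pc h; simp at h
  | cons pc0 rest ih =>
    obtain ⟨p, len⟩ := pc0
    intro occ hpark hsub hcard hfree hwocc hprefs hcount
    have hwm : w ≤ m := (Finset.mem_Icc.1 (hsub hwocc)).2
    cases hpark with
    | cons _ _ _ _ s hps hrest =>
      obtain ⟨⟨hp_le, hs_le, hdisj⟩, hmin⟩ := hps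
      have hdisjf : Disjoint occ (Finset.Ico s (s + len)) := by
        rw [Finset.disjoint_right]; intro a ha; exact hdisj a ha
      have hcard' : (occ ∪ Finset.Ico s (s + len)).card + ((rest.map Prod.snd).sum) = m := by
        rw [Finset.card_union_of_disjoint hdisjf, Nat.card_Ico]
        rw [List.map_cons, List.sum_cons] at hcard
        omega
      by_cases hp : p = 1
      · -- head is the unique pref-1 car
        subst hp
        have hcr : rest.countP (fun pc => pc.1 = 1) = 0 := by
          rw [List.countP_cons] at hcount
          simp only [decide_eq_true_eq, if_true] at hcount
          omega
        have hrw : ∀ pc ∈ rest, w ≤ pc.1 := by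
          intro pc hpc
          rcases hprefs pc (List.mem_cons_of_mem _ hpc) with h | h
          · exfalso
            have := List.countP_eq_zero.1 hcr pc hpc
            simp at this
            exact this h
          · exact h
        have hrw1 : ∀ pc ∈ rest, 1 ≤ pc.1 := fun pc hpc => by
          have := hrw pc hpc; omega
        have hsub' : occ ∪ Finset.Ico s (s + len) ⊆ Finset.Icc 1 m := by
          intro t ht
          rcases Finset.mem_union.1 ht with h | h
          · exact hsub h
          · rw [Finset.mem_Ico] at h
            exact Finset.mem_Icc.2 ⟨by omega, by omega⟩
        obtain ⟨occF, h1, h2, h3, h4⟩ := fin_lemma m rest _ hrest hsub' hrw1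
        have hFcard : occF.card = m := by rw [h3]; omega
        have hFeq : occF = Finset.Icc 1 m := by
          apply Finset.eq_of_subset_of_card_le h2
          rw [Nat.card_Icc, hFcard]
          omega
        have hs1 : s = 1 := by
          by_contra hne
          have h1m : (1 : ℕ) ∈ occF := by
            rw [hFeq]; exact Finset.mem_Icc.2 ⟨le_refl 1, by omega⟩
          rcases h4 1 h1m with h | ⟨pc', hpc', hle⟩
          · rcases Finset.mem_union.1 h with h | h
            · exact hfree 1 (by omega) h
            · rw [Finset.mem_Ico] at h; omega
          · have := hrw pc' hpc'; omega
        subst hs1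
        have hlen_le : len + 1 ≤ w := by
          by_contra h
          exact hdisj w (Finset.mem_Ico.2 ⟨by omega, by omega⟩) hwocc
        have hlen_ge : w - 1 ≤ len := by
          by_contra h
          have hwm1 : w - 1 ∈ occF := by
            rw [hFeq]; exact Finset.mem_Icc.2 ⟨by omega, by omega⟩
          rcases h4 (w - 1) hwm1 with hh | ⟨pc', hpc', hle⟩
          · rcases Finset.mem_union.1 hh with hh | hh
            · exact hfree (w - 1) (by omega) hh
            · rw [Finset.mem_Ico] at hh; omega
          · have := hrw pc' hpc'; omega
        intro pc hpc hpc1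
        rcases List.mem_cons.1 hpc with rfl | hpc
        · simp; omega
        · exfalso
          have := List.countP_eq_zero.1 hcr pc hpc
          simp at this
          exact this hpc1
      · -- head has pref ≥ w
        have hwp : w ≤ p := by
          rcases hprefs (p, len) (List.mem_cons_self) with h | h
          · exact absurd h hp
          · exact h
        have hsub' : occ ∪ Finset.Ico s (s + len) ⊆ Finset.Icc 1 m := by
          intro t ht
          rcases Finset.mem_union.1 ht with h | h
          · exact hsub h
          · rw [Finset.mem_Ico] at h
            exact Finset.mem_Icc.2 ⟨by omega, by omega⟩
        have hfree' : ∀ t, t < w → t ∉ occ ∪ Finset.Ico s (s + len) := by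
          intro t ht hmem
          rcases Finset.mem_union.1 hmem with h | h
          · exact hfree t ht h
          · rw [Finset.mem_Ico] at h; omega
        have hcount' : rest.countP (fun pc => pc.1 = 1) = 1 := by
          rw [List.countP_cons] at hcount
          simpa [hp] using hcount
        have hres := ih _ hrest hsub' hcard' hfree'
          (Finset.mem_union_left _ hwocc)
          (fun pc hpc => hprefs pc (List.mem_cons_of_mem _ hpc)) hcount'
        intro pc hpc hpc1
        rcases List.mem_cons.1 hpc with rfl | hpc
        · exact absurd hpc1 hp
        · exact hres pc hpc hpc1

set_option maxHeartbeats 1000000 in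
/-- if `χ(y) = n − 1` then `y₂ = y₃ = ⋯ = yₙ`. -/
theorem stmt9 (n : ℕ) (hn : 2 ≤ n) (y : List ℕ) (hylen : y.length = n)
    (hypos : ∀ v ∈ y, 0 < v) (hchi : chi y = n - 1) :
    ∀ i j, 1 ≤ i → i < n → 1 ≤ j → j < n → y.getD i 0 = y.getD j 0 := by
  have hbdd : BddAbove {d | ∃ x, PAinv y x ∧ deg x = d} := by
    refine ⟨n, fun d hd => ?_⟩
    obtain ⟨x, hx, hdeg⟩ := hd
    have hpa := hx x (List.Perm.refl x)
    have hlen : x.length = n := by rw [hpa.1, hylen]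
    calc d = deg x := hdeg.symm
      _ ≤ x.length := List.length_filter_le _ _
      _ = n := hlen
  have hne : Set.Nonempty {d | ∃ x, PAinv y x ∧ deg x = d} := by
    by_contra h
    rw [Set.not_nonempty_iff_eq_empty] at h
    unfold chi at hchi
    rw [h, csSup_empty] at hchi
    simp at hchi
    omega
  have hmem : n - 1 ∈ {d | ∃ x, PAinv y x ∧ deg x = d} := by
    have := Nat.sSup_mem hne hbdd
    unfold chi at hchi
    rwa [hchi] at this
  obtain ⟨x, hinv, hdeg⟩ := hmem
  have hpa : PA y x := hinv x (List.Perm.refl x)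
  obtain ⟨hlen0, hbounds, -⟩ := hpa
  have hxlen : x.length = n := by rw [hlen0, hylen]
  set m := y.sum with hm
  -- the filtered list of non-1 entries
  set F := x.filter (fun v => v ≠ 1) with hF
  have hFlen : F.length = n - 1 := hdeg
  have hFne : F ≠ [] := by
    intro h
    rw [h] at hFlen
    simp at hFlen
    omega
  obtain ⟨w, hwF, hwmin⟩ := list_exists_min F hFne
  have hwx : w ∈ x := List.mem_of_mem_filter hwF
  have hw1 : w ≠ 1 := by
    have := List.of_mem_filter hwF
    simpa using this
  have hw2 : 2 ≤ w := by
    have := (hbounds w hwx).1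
    omega
  have hwm : w ≤ m := (hbounds w hwx).2
  -- the 1-entries of x form exactly [1]
  have hGlen : (x.filter (fun v => v = 1)).length = 1 := by
    have h1 := x.length_eq_length_filter_add (fun v => v = 1)
    have h2 : x.filter (fun v => !(decide (v = 1))) = F := by
      rw [hF]
      simp only [ne_eq, decide_not]
    rw [h2, hFlen, hxlen] at h1
    omega
  have hG : x.filter (fun v => v = 1) = [1] := by
    rcases hG' : x.filter (fun v => v = 1) with - | ⟨a, t⟩
    · rw [hG'] at hGlen; simp at hGlen
    · rw [hG'] at hGlen
      simp at hGlen
      have ha : a = 1 := by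
        have : a ∈ x.filter (fun v => v = 1) := by rw [hG']; simp
        have := List.of_mem_filter this
        simpa using this
      rw [hG', ha, hGlen]
  have hperm1 : x.Perm (1 :: F) := by
    have := (List.filter_append_perm (fun v => v = 1) x).symm
    rw [hG] at this
    have h2 : x.filter (fun v => !(decide (v = 1))) = F := by
      rw [hF]
      simp only [ne_eq, decide_not]
    rw [h2] at this
    simpa using this
  -- remaining entries
  set r := F.erase w with hr
  have hrperm : F.Perm (w :: r) := List.perm_cons_erase hwF
  have hrlen : r.length = n - 2 := by
    have := hrperm.length_eq
    rw [hFlen] at this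
    simp at this
    omega
  have hrmem : ∀ v ∈ r, w ≤ v ∧ v ≠ 1 := by
    intro v hv
    have hvF : v ∈ F := List.mem_of_mem_erase hv
    refine ⟨hwmin v hvF, ?_⟩
    have := List.of_mem_filter hvF
    simpa using this
  -- destruct y
  obtain ⟨y₀, ytail, rfl⟩ : ∃ a t, y = a :: t := by
    cases y with
    | nil => simp at hylen; omega
    | cons a t => exact ⟨a, t, rfl⟩
  have hytlen : ytail.length = n - 1 := by
    simp at hylen
    omega
  have key : ∀ i, 1 ≤ i → i < n → ytail.getD (i - 1) 0 = w - 1 := by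
    intro i hi1 hin
    set l₁ := r.take (i - 1) with hl1
    set l₂ := r.drop (i - 1) with hl2
    have hl₁len : l₁.length = i - 1 := by
      rw [hl1, List.length_take]
      omega
    set x' := w :: (l₁ ++ 1 :: l₂) with hx'
    have hperm' : x.Perm x' := by
      refine hperm1.trans ?_
      refine (List.Perm.cons 1 hrperm).trans ?_
      refine (List.Perm.swap w 1 r).trans ?_
      refine List.Perm.cons w ?_
      have h := (List.perm_middle (a := 1) (l₁ := l₁) (l₂ := l₂)).symm
      rwa [hl1, hl2, List.take_append_drop] at h
    have hpa' : PA (y₀ :: ytail) x' := hinv x' hperm'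
    obtain ⟨hlen', hb', hpark'⟩ := hpa'
    have hlentail : (l₁ ++ 1 :: l₂).length = ytail.length := by
      simp [hl1, hl2]
      omega
    have hy₀ : 0 < y₀ := hypos y₀ (List.mem_cons_self)
    rw [hx', List.zip_cons_cons] at hpark'
    cases hpark' with
    | cons _ _ _ _ s hps hrest =>
      obtain ⟨⟨hws, hsm, hdisj⟩, hmin2⟩ := hps
      have hs : s = w := by
        by_contra h
        exact hmin2 w (by omega) ⟨le_refl w, by omega, by simp⟩
      have hmapsnd : ((l₁ ++ 1 :: l₂).zip ytail).map Prod.snd = ytail := by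
        apply List.map_snd_zip
        omega
      have hmapfst : ((l₁ ++ 1 :: l₂).zip ytail).map Prod.fst = l₁ ++ 1 :: l₂ := by
        apply List.map_fst_zip
        omega
      have happ := main_lemma m w hw2 ((l₁ ++ 1 :: l₂).zip ytail)
        (∅ ∪ Finset.Ico s (s + y₀)) hrest ?_ ?_ ?_ ?_ ?_ ?_
      rotate_left
      · intro t ht
        rw [Finset.empty_union, Finset.mem_Ico] at ht
        exact Finset.mem_Icc.2 ⟨by omega, by omega⟩
      · rw [Finset.empty_union, Nat.card_Ico, hmapsnd]
        have : m = y₀ + ytail.sum := by rw [hm]; simp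
        omega
      · intro t ht hmem
        rw [Finset.empty_union, Finset.mem_Ico] at hmem
        omega
      · rw [Finset.empty_union, Finset.mem_Ico]
        omega
      · intro pc hpc
        have := (List.of_mem_zip hpc).1
        rcases List.mem_append.1 this with h | h
        · exact Or.inr (hrmem pc.1 (List.take_subset _ _ h)).1
        · rcases List.mem_cons.1 h with h | h
          · exact Or.inl h
          · exact Or.inr (hrmem pc.1 (List.drop_subset _ _ h)).1
      · have hcnt : (l₁ ++ 1 :: l₂).countP (fun v => v = 1) = 1 := by
          rw [List.countP_append, List.countP_cons]
          have hc1 : l₁.countP (fun v => v = 1) = 0 := by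
            apply List.countP_eq_zero.2
            intro v hv
            have := (hrmem v (List.take_subset _ _ hv)).2
            simpa using this
          have hc2 : l₂.countP (fun v => v = 1) = 0 := by
            apply List.countP_eq_zero.2
            intro v hv
            have := (hrmem v (List.drop_subset _ _ hv)).2
            simpa using this
          rw [hc1, hc2]
          simp
        calc ((l₁ ++ 1 :: l₂).zip ytail).countP (fun pc => pc.1 = 1)
            = (((l₁ ++ 1 :: l₂).zip ytail).map Prod.fst).countP (fun v => v = 1) := by
              rw [List.countP_map]; rfl
          _ = 1 := by rw [hmapfst]; exact hcnt
      -- now extract the conclusion for position i-1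
      have hilt : i - 1 < ((l₁ ++ 1 :: l₂).zip ytail).length := by
        rw [List.length_zip, hlentail, hytlen]
        omega
      have hgetzip : ((l₁ ++ 1 :: l₂).zip ytail)[i-1]'hilt
          = ((l₁ ++ 1 :: l₂)[i-1]'(by rw [hlentail, hytlen]; omega),
             ytail[i-1]'(by rw [hytlen]; omega)) := by
        apply List.getElem_zip
      have hget1 : (l₁ ++ 1 :: l₂)[i-1]'(by rw [hlentail, hytlen]; omega) = 1 := by
        rw [List.getElem_append_right (by omega : l₁.length ≤ i - 1)]
        simp [hl₁len]
      have hpcmem : (1, ytail[i-1]'(by rw [hytlen]; omega)) ∈ (l₁ ++ 1 :: l₂).zip ytail := by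
        have hmm := List.getElem_mem hilt
        rw [hgetzip, hget1] at hmm
        exact hmm
      have := happ _ hpcmem rfl
      simp at this
      rw [List.getD_eq_getElem ytail 0 (by rw [hytlen]; omega)]
      exact this
  intro i j hi1 hin hj1 hjn
  have h1 : (y₀ :: ytail).getD i 0 = ytail.getD (i-1) 0 := by
    conv_lhs => rw [show i = (i - 1) + 1 by omega]
    rw [List.getD_cons_succ]
  have h2 : (y₀ :: ytail).getD j 0 = ytail.getD (j-1) 0 := by
    conv_lhs => rw [show j = (j - 1) + 1 by omega]
    rw [List.getD_cons_succ]
  rw [h1, h2, key i hi1 hin, key j hj1 hjn]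
end

section
/- Let y = (y_1, y_2, ..., y_n) be a vector of n positive integer car lengths. The image of the degree function deg : PAinv_n(y) → {0, 1, ..., n−1} is exactly {0, 1, ..., χ(y)}; that is, for every d with 0 ≤ d ≤ χ(y), there exists x ∈ PAinv_n(y) with deg x = d. -/
/- ### Auxiliary lemmas -/

lemma parksAt_unique {occ : Finset ℕ} {m p l s t : ℕ}
    (hs : ParksAt occ m p l s) (ht : ParksAt occ m p l t) : s = t := by
  rcases lt_trichotomy s t with h | h | h
  · exact absurd hs.1 (ht.2 s h)
  · exact h
  · exact absurd ht.1 (hs.2 t h)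

lemma block_subset {m s l : ℕ} (h1 : 1 ≤ s) (h2 : s + l ≤ m + 1) :
    Finset.Ico s (s + l) ⊆ Finset.Icc 1 m := by
  intro t ht
  simp only [Finset.mem_Ico] at ht
  simp only [Finset.mem_Icc]
  omega

lemma card_union_block {occ : Finset ℕ} {s l : ℕ}
    (hdisj : ∀ t ∈ Finset.Ico s (s + l), t ∉ occ) :
    (occ ∪ Finset.Ico s (s + l)).card = occ.card + l := by
  rw [Finset.card_union_of_disjoint, Nat.card_Ico]
  · omega
  · rw [Finset.disjoint_right]
    intro a ha
    exact hdisj a ha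

/-- If all cars in a run have preference `≥ w` and the run fills the street
exactly, then every spot `< w` was already occupied. -/
lemma run_covers (m w : ℕ) : ∀ (Q L : List ℕ) (occ : Finset ℕ),
    Q.length = L.length → occ ⊆ Finset.Icc 1 m → occ.card + L.sum = m →
    1 ≤ w → (∀ q ∈ Q, w ≤ q) → Park m occ (Q.zip L) →
    ∀ j, 1 ≤ j → j ≤ m → j < w → j ∈ occ := by
  intro Q
  induction Q with
  | nil =>
    intro L occ hlen hsub hcard hw hq hpark j hj1 hjm hjw
    have hL : L = [] := by
      cases L with
      | nil => rfl
      | cons a t => simp at hlen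
    subst hL
    simp only [List.sum_nil, Nat.add_zero] at hcard
    have hocc : occ = Finset.Icc 1 m :=
      Finset.eq_of_subset_of_card_le hsub (by rw [Nat.card_Icc]; omega)
    rw [hocc]
    simp only [Finset.mem_Icc]
    omega
  | cons q Q ih =>
    intro L occ hlen hsub hcard hw hq hpark j hj1 hjm hjw
    cases L with
    | nil => simp at hlen
    | cons l L =>
      rw [List.zip_cons_cons] at hpark
      cases hpark with
      | cons _ _ _ _ s hps hrest =>
        obtain ⟨⟨hqs, hsl, hfree⟩, -⟩ := hps
        have hws : w ≤ s := le_trans (hq q (List.mem_cons_self)) hqs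
        have h1s : 1 ≤ s := le_trans hw hws
        have hsub' : occ ∪ Finset.Ico s (s + l) ⊆ Finset.Icc 1 m :=
          Finset.union_subset hsub (block_subset h1s hsl)
        have hcard' : (occ ∪ Finset.Ico s (s + l)).card + L.sum = m := by
          rw [card_union_block hfree]
          simp only [List.sum_cons] at hcard
          omega
        have hmem := ih L (occ ∪ Finset.Ico s (s + l))
          (by simpa using hlen) hsub' hcard' hw
          (fun q' hq' => hq q' (List.mem_cons_of_mem q hq')) hrest j hj1 hjm hjw
        rcases Finset.mem_union.1 hmem with h | h
        · exact h
        · exfalso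
          simp only [Finset.mem_Ico] at h
          omega

/-- Main lemma: if every arrangement of `w :: P` parks (with `w` at most every
non-1 entry of `P`), then every arrangement of `1 :: P` parks. -/
lemma replace_by_one (m : ℕ) : ∀ (k : ℕ) (P : List ℕ) (w : ℕ) (occ : Finset ℕ) (L : List ℕ),
    P.length = k → 1 ≤ w → (∀ q ∈ P, 1 ≤ q) → (∀ q ∈ P, q = 1 ∨ w ≤ q) →
    (∀ v ∈ L, 1 ≤ v) → P.length + 1 = L.length →
    occ ⊆ Finset.Icc 1 m → occ.card + L.sum = m →
    (∀ P', (w :: P).Perm P' → Park m occ (P'.zip L)) →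
    ∀ P', (1 :: P).Perm P' → Park m occ (P'.zip L) := by
  intro k
  induction k using Nat.strong_induction_on with
  | _ k ih =>
  intro P w occ L hk hw hP1 hPC hL1 hlen hsub hcard hyp P' hperm
  cases L with
  | nil => simp at hlen
  | cons l L =>
  have hl1 : 1 ≤ l := hL1 l (List.mem_cons_self)
  have hlenP' : P'.length = P.length + 1 := by
    have := hperm.length_eq
    simpa using this.symm
  cases P' with
  | nil => simp at hlenP'
  | cons q R =>
  rw [List.zip_cons_cons]
  by_cases hqP : q ∈ P
  · -- case 1 : the first preference comes from P
    have hPq : P.Perm (q :: P.erase q) := List.perm_cons_erase hqP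
    have hq_first : (w :: P).Perm (q :: w :: P.erase q) :=
      (hPq.cons w).trans (List.Perm.swap q w _)
    have hRperm : R.Perm (1 :: P.erase q) := by
      have h1 : (q :: R).Perm (q :: 1 :: P.erase q) :=
        hperm.symm.trans ((hPq.cons 1).trans (List.Perm.swap q 1 _))
      exact h1.cons_inv
    have hrun := hyp _ hq_first
    rw [List.zip_cons_cons] at hrun
    cases hrun with
    | cons _ _ _ _ t hpt hrest0 =>
    have hq1 : 1 ≤ q := hP1 q hqP
    have h1t : 1 ≤ t := le_trans hq1 hpt.1.1
    have hAP : ∀ R₂, (w :: P.erase q).Perm R₂ →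
        Park m (occ ∪ Finset.Ico t (t + l)) (R₂.zip L) := by
      intro R₂ h2
      have hrun2 := hyp (q :: R₂) (hq_first.trans (h2.cons q))
      rw [List.zip_cons_cons] at hrun2
      cases hrun2 with
      | cons _ _ _ _ t' hpt' hrest' =>
        rwa [parksAt_unique hpt' hpt] at hrest'
    have hklt : (P.erase q).length < k := by
      rw [List.length_erase_of_mem hqP]
      have : 1 ≤ P.length := List.length_pos_iff.2 (List.ne_nil_of_mem hqP)
      omega
    have hres := ih _ hklt (P.erase q) w (occ ∪ Finset.Ico t (t + l)) L rfl hw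
      (fun q' hq' => hP1 q' (List.mem_of_mem_erase hq'))
      (fun q' hq' => hPC q' (List.mem_of_mem_erase hq'))
      (fun v hv => hL1 v (List.mem_cons_of_mem l hv))
      (by
        rw [List.length_erase_of_mem hqP]
        have h1 : 1 ≤ P.length := List.length_pos_iff.2 (List.ne_nil_of_mem hqP)
        simp only [List.length_cons] at hlen
        omega)
      (Finset.union_subset hsub (block_subset h1t hpt.1.2.1))
      (by
        rw [card_union_block hpt.1.2.2]
        simp only [List.sum_cons] at hcard
        omega)
      hAP R hRperm.symm
    exact Park.cons _ q l _ t hpt hres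
  · -- case 2 : the first preference is the new `1`, and `1 ∉ P`
    have hq1 : q = 1 := by
      have hqmem : q ∈ (1 :: P) := hperm.symm.subset (List.mem_cons_self)
      rcases List.mem_cons.1 hqmem with h | h
      · exact h
      · exact absurd h hqP
    subst hq1
    have h1P : (1 : ℕ) ∉ P := hqP
    have hRP : P.Perm R := hperm.cons_inv
    have hP_ge : ∀ q' ∈ (w :: P), w ≤ q' := by
      intro q' h
      rcases List.mem_cons.1 h with h | h
      · omega
      · rcases hPC q' h with h1 | h1
        · exact absurd (h1 ▸ h) h1P
        · exact h1
    have hrun := hyp (w :: P) (List.Perm.refl _)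
    rw [List.zip_cons_cons] at hrun
    cases hrun with
    | cons _ _ _ _ s hps hrest =>
    have hps1 : ParksAt occ m 1 l s := by
      obtain ⟨⟨hws, hsl, hfree⟩, hmin⟩ := hps
      refine ⟨⟨by omega, hsl, hfree⟩, ?_⟩
      intro s' hs' hfit'
      obtain ⟨h1s', hs'l, hfree'⟩ := hfit'
      by_cases hws' : w ≤ s'
      · exact hmin s' hs' ⟨hws', hs'l, hfree'⟩
      · push_neg at hws'
        have hjm : s' ≤ m := by omega
        have hmemocc : s' ∈ occ :=
          run_covers m w (w :: P) (l :: L) occ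
            (by simp only [List.length_cons] at hlen ⊢; omega) hsub hcard hw hP_ge
            (by
              have := hyp (w :: P) (List.Perm.refl _)
              rwa [List.zip_cons_cons] at this)
            s' h1s' hjm hws'
        exact hfree' s' (by simp only [Finset.mem_Ico]; omega) hmemocc
    refine Park.cons _ _ _ _ s hps1 ?_
    have hrun2 := hyp (w :: R) ((hRP.cons w))
    rw [List.zip_cons_cons] at hrun2
    cases hrun2 with
    | cons _ _ _ _ s₂ hps₂ hrest₂ =>
      rwa [parksAt_unique hps₂ hps] at hrest₂

lemma sum_pos_of_pos {y : List ℕ} (hy : y ≠ []) (hpos : ∀ v ∈ y, 0 < v) :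
    1 ≤ y.sum := by
  cases y with
  | nil => exact absurd rfl hy
  | cons a t =>
    have := hpos a (List.mem_cons_self)
    simp only [List.sum_cons]
    omega

/-- The all-ones preference list parks from a prefix `[1,c]` of occupied spots. -/
lemma ones_park (m : ℕ) : ∀ (L : List ℕ) (c : ℕ), (∀ v ∈ L, 1 ≤ v) → c + L.sum ≤ m →
    Park m (Finset.Icc 1 c) ((List.replicate L.length 1).zip L) := by
  intro L
  induction L with
  | nil => intro c _ _; exact Park.nil _
  | cons l L ih =>
    intro c hL hsum
    have hl1 : 1 ≤ l := hL l (List.mem_cons_self)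
    simp only [List.sum_cons] at hsum
    have hps : ParksAt (Finset.Icc 1 c) m 1 l (c + 1) := by
      refine ⟨⟨by omega, by omega, ?_⟩, ?_⟩
      · intro t ht
        simp only [Finset.mem_Ico] at ht
        simp only [Finset.mem_Icc]
        omega
      · rintro s' hs' ⟨h1, h2, h3⟩
        exact h3 s' (by simp only [Finset.mem_Ico]; omega)
          (by simp only [Finset.mem_Icc]; omega)
    have hunion : Finset.Icc 1 c ∪ Finset.Ico (c + 1) (c + 1 + l) = Finset.Icc 1 (c + l) := by
      ext t
      simp only [Finset.mem_Icc, Finset.mem_Ico, Finset.mem_union]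
      omega
    show Park m (Finset.Icc 1 c) (((1, l) :: (List.replicate L.length 1).zip L))
    refine Park.cons _ _ _ _ (c + 1) hps ?_
    rw [hunion]
    exact ih (c + l) (fun v hv => hL v (List.mem_cons_of_mem l hv)) (by omega)

lemma ones_PAinv (y : List ℕ) (hpos : ∀ v ∈ y, 0 < v) (hne : y ≠ []) :
    PAinv y (List.replicate y.length 1) := by
  intro x' hperm
  have hx' : x' = List.replicate y.length 1 := List.perm_replicate.1 hperm.symm
  subst hx'
  have hm1 : 1 ≤ y.sum := sum_pos_of_pos hne hpos
  refine ⟨by simp, ?_, ?_⟩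
  · intro v hv
    have := List.eq_of_mem_replicate hv
    subst this
    exact ⟨le_refl 1, hm1⟩
  · have h0 : Finset.Icc 1 0 = (∅ : Finset ℕ) := by
      apply Finset.Icc_eq_empty
      omega
    have := ones_park y.sum y 0 (fun v hv => hpos v hv) (by omega)
    rwa [h0] at this

lemma deg_replicate_ones (k : ℕ) : deg (List.replicate k 1) = 0 := by
  unfold deg
  have : (List.replicate k 1).filter (fun v => v ≠ 1) = [] := by
    apply List.filter_eq_nil_iff.2
    intro a ha
    have := List.eq_of_mem_replicate ha
    subst this
    simp
  rw [this]
  rfl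

/-- Replacing the least non-1 entry of an invariant assortment by 1
yields an invariant assortment of one lower degree. -/
lemma step_down (y : List ℕ) (hpos : ∀ v ∈ y, 0 < v) (x : List ℕ)
    (hx : PAinv y x) (d : ℕ) (hdeg : deg x = d + 1) :
    ∃ x', PAinv y x' ∧ deg x' = d := by
  classical
  set F := x.filter (fun v => v ≠ 1) with hF
  have hFne : F ≠ [] := by
    intro h
    rw [deg, ← hF, h] at hdeg
    simp at hdeg
  have hFt : F.toFinset.Nonempty := by
    cases hFcases : F with
    | nil => exact absurd hFcases hFne
    | cons a t => exact ⟨a, by simp⟩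
  set w := F.toFinset.min' hFt with hwdef
  have hwF : w ∈ F := List.mem_toFinset.1 (Finset.min'_mem _ _)
  have hwx : w ∈ x := List.mem_of_mem_filter hwF
  have hwne1 : w ≠ 1 := by
    have := List.of_mem_filter hwF
    simpa using this
  have hwmin : ∀ q ∈ x, q ≠ 1 → w ≤ q := by
    intro q hq h1
    apply Finset.min'_le
    rw [List.mem_toFinset, hF, List.mem_filter]
    exact ⟨hq, by simpa using h1⟩
  obtain ⟨hlenx, hbound, hparkx⟩ := hx x (List.Perm.refl x)
  have hw1 : 1 ≤ w := (hbound w hwx).1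
  have hyne : y ≠ [] := by
    intro h
    rw [h] at hlenx
    simp at hlenx
    exact absurd (hlenx ▸ hwx) List.not_mem_nil
  have hm1 : 1 ≤ y.sum := sum_pos_of_pos hyne hpos
  have hlx : 1 ≤ x.length := List.length_pos_iff.2 (List.ne_nil_of_mem hwx)
  have herase_len : (x.erase w).length = x.length - 1 := List.length_erase_of_mem hwx
  have hxperm : x.Perm (w :: x.erase w) := List.perm_cons_erase hwx
  refine ⟨1 :: x.erase w, ?_, ?_⟩
  · intro x'' hperm
    refine ⟨?_, ?_, ?_⟩
    · rw [← hperm.length_eq]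
      simp only [List.length_cons, herase_len]
      omega
    · intro v hv
      have hv' : v ∈ (1 :: x.erase w) := hperm.symm.subset hv
      rcases List.mem_cons.1 hv' with h | h
      · subst h; exact ⟨le_refl 1, hm1⟩
      · exact hbound v (List.mem_of_mem_erase h)
    · refine replace_by_one y.sum (x.erase w).length (x.erase w) w ∅ y rfl hw1
        (fun q hq => (hbound q (List.mem_of_mem_erase hq)).1)
        (fun q hq => by
          by_cases h1 : q = 1
          · exact Or.inl h1
          · exact Or.inr (hwmin q (List.mem_of_mem_erase hq) h1))
        (fun v hv => hpos v hv)
        (by rw [herase_len, hlenx]; omega)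
        (Finset.empty_subset _)
        (by simp)
        (fun P' hP' => (hx P' (hxperm.trans hP')).2.2)
        x'' hperm
  · have h1 : deg (1 :: x.erase w) = deg (x.erase w) := by
      unfold deg
      rw [List.filter_cons]
      simp
    have hperm2 : deg x = deg (w :: x.erase w) := by
      unfold deg
      exact (hxperm.filter _).length_eq
    have h2 : deg (w :: x.erase w) = deg (x.erase w) + 1 := by
      unfold deg
      rw [List.filter_cons]
      have : (fun v => decide (v ≠ 1)) w = true := by simpa using hwne1
      simp only [this, if_true]
      simp
    rw [h1]
    omega

/-- the image of `deg` on `PAinv_n(y)` is exactly `{0, 1, …, χ(y)}`. -/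
theorem stmt11 (n : ℕ) (hn : 0 < n) (y : List ℕ) (hylen : y.length = n)
    (hypos : ∀ v ∈ y, 0 < v) :
    {d : ℕ | ∃ x, PAinv y x ∧ deg x = d} = Set.Iic (chi y) := by
  classical
  have hyne : y ≠ [] := by
    intro h
    rw [h] at hylen
    simp at hylen
    omega
  have h0 : (0 : ℕ) ∈ {d : ℕ | ∃ x, PAinv y x ∧ deg x = d} :=
    ⟨List.replicate y.length 1, ones_PAinv y hypos hyne, deg_replicate_ones _⟩
  have hbdd : BddAbove {d : ℕ | ∃ x, PAinv y x ∧ deg x = d} := by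
    refine ⟨n, ?_⟩
    rintro d ⟨x, hx, rfl⟩
    have hlen := (hx x (List.Perm.refl x)).1
    calc deg x ≤ x.length := List.length_filter_le _ _
      _ = n := by rw [hlen, hylen]
  have hstep : ∀ d : ℕ, (d + 1) ∈ {d : ℕ | ∃ x, PAinv y x ∧ deg x = d} →
      d ∈ {d : ℕ | ∃ x, PAinv y x ∧ deg x = d} := by
    rintro d ⟨x, hx, hdeg⟩
    exact step_down y hypos x hx d hdeg
  have hdown : ∀ d : ℕ, d ∈ {d : ℕ | ∃ x, PAinv y x ∧ deg x = d} →
      ∀ e, e ≤ d → e ∈ {d : ℕ | ∃ x, PAinv y x ∧ deg x = d} := by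
    intro d
    induction d with
    | zero =>
      intro h e he
      have : e = 0 := Nat.le_zero.1 he
      subst this
      exact h
    | succ d ihd =>
      intro h e he
      rcases Nat.eq_or_lt_of_le he with h' | h'
      · subst h'
        exact h
      · exact ihd (hstep d h) e (by omega)
  have hne : Set.Nonempty {d : ℕ | ∃ x, PAinv y x ∧ deg x = d} := ⟨0, h0⟩
  have hchi : chi y ∈ {d : ℕ | ∃ x, PAinv y x ∧ deg x = d} := by
    rw [chi]
    exact Nat.sSup_mem hne hbdd
  ext d
  simp only [Set.mem_Iic]
  constructor
  · intro hd
    exact le_csSup hbdd hd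
  · intro hd
    exact hdown _ hchi d hd
end
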